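/- arXiv:1408.5369 — 7 statements merged into one kernel-verified Lean document; each statement's English description precedes it below -/
import Mathlib

section
/- Let u and v be distinct unit vectors in ℝ^p with at most k nonzero entries each, and suppose the difference vvᵀ - uuᵀ is nonzero. Then the matrix (vvᵀ - uuᵀ)/‖vvᵀ - uuᵀ‖₂ has rank 2, trace 0, and its nonzero eigenvalues are +1/√2 and -1/√2; consequently it can be written as (xxᵀ - yyᵀ)/√2 for some unit vectors x, y each having at most 2k nonzero entries. -/
open Matrix Finset
open scoped Classical

set_option maxHeartbeats 1000000 in
/-- For distinct sparse unit vectors `u, v`, the normalised difference of projections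
`(vvᵀ - uuᵀ)/‖vvᵀ - uuᵀ‖₂` has rank 2, trace 0, nonzero eigenvalues `±1/√2`, and can be
written as `(xxᵀ - yyᵀ)/√2` for unit vectors `x, y` with at most `2k` nonzero entries. -/
theorem stmt_5 (p k : ℕ) (u v : Fin p → ℝ)
    (hu : ∑ i, u i ^ 2 = 1) (hv : ∑ i, v i ^ 2 = 1)
    (hu0 : (Finset.univ.filter (fun j => u j ≠ 0)).card ≤ k)
    (hv0 : (Finset.univ.filter (fun j => v j ≠ 0)).card ≤ k)
    (hne : (fun i j => v i * v j - u i * u j) ≠ (0 : Matrix (Fin p) (Fin p) ℝ)) :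
    ∀ M : Matrix (Fin p) (Fin p) ℝ,
      M = (Real.sqrt (∑ i, ∑ j, (v i * v j - u i * u j) ^ 2))⁻¹ •
            (fun i j => v i * v j - u i * u j) →
      M.rank = 2 ∧ M.trace = 0 ∧
      ∃ x y : Fin p → ℝ,
        (∑ i, x i ^ 2 = 1) ∧ (∑ i, y i ^ 2 = 1) ∧
        (Finset.univ.filter (fun j => x j ≠ 0)).card ≤ 2 * k ∧
        (Finset.univ.filter (fun j => y j ≠ 0)).card ≤ 2 * k ∧
        (∑ i, x i * y i = 0) ∧
        M.mulVec x = (1 / Real.sqrt 2) • x ∧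
        M.mulVec y = (-(1 / Real.sqrt 2)) • y ∧
        M = (1 / Real.sqrt 2) • (fun i j => x i * x j - y i * y j) := by
  intro M hM
  set a := ∑ i, u i * v i with ha
  -- Frobenius norm squared equals 2(1 - a²)
  have hSe : ∑ i, ∑ j, (v i * v j - u i * u j)^2 = 2 - 2*a^2 := by
    have h1 : ∀ i, ∑ j, (v i * v j - u i * u j)^2
        = v i ^2 + u i^2 - 2*(u i * v i)*a := by
      intro i
      have e : ∀ j, (v i * v j - u i * u j)^2
          = v i^2 * v j^2 + u i^2 * u j^2 - 2*(u i * v i)*(u j * v j) := fun j => by ring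
      rw [Finset.sum_congr rfl fun j _ => e j, Finset.sum_sub_distrib,
        Finset.sum_add_distrib, ← Finset.mul_sum, ← Finset.mul_sum, ← Finset.mul_sum, hu, hv,
        ← ha]
      ring
    rw [Finset.sum_congr rfl fun i _ => h1 i, Finset.sum_sub_distrib, Finset.sum_add_distrib,
      hu, hv,
      Finset.sum_congr rfl (fun i _ => show 2*(u i * v i)*a = (u i * v i)*(2*a) from by ring),
      ← Finset.sum_mul, ← ha]
    ring
  -- positivity of the norm
  have hSpos : 0 < ∑ i, ∑ j, (v i * v j - u i * u j)^2 := by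
    have : ∃ i j, v i * v j - u i * u j ≠ 0 := by
      by_contra h
      push_neg at h
      exact hne (by funext i j; simpa using h i j)
    obtain ⟨i0, j0, hij⟩ := this
    refine Finset.sum_pos' (fun i _ => Finset.sum_nonneg fun j _ => sq_nonneg _) ⟨i0, mem_univ _, ?_⟩
    refine Finset.sum_pos' (fun j _ => sq_nonneg _) ⟨j0, mem_univ _, ?_⟩
    positivity
  have ha2 : a^2 < 1 := by nlinarith [hSe, hSpos]
  set l := Real.sqrt (1 - a^2) with hldef
  have hl2 : l^2 = 1 - a^2 := Real.sq_sqrt (by linarith)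
  have hlpos : 0 < l := Real.sqrt_pos.mpr (by linarith)
  have h1l : (0:ℝ) < 1 + l := by linarith
  have h1l' : (1:ℝ) + l ≠ 0 := ne_of_gt h1l
  set c := a / (1 + l) with hcdef
  have hc2 : c^2 = (1 - l)/(1 + l) := by
    rw [hcdef, div_pow]
    rw [show a^2 = (1-l)*(1+l) from by nlinarith]
    field_simp
  have hca : c * a = (1 - l^2)/(1 + l) := by
    rw [hcdef]
    rw [show a/(1+l)*a = a^2/(1+l) from by ring, show a^2 = 1 - l^2 from by linarith]
  set N := l * Real.sqrt (2/(1+l)) with hNdef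
  have hlne : l ≠ 0 := ne_of_gt hlpos
  have hq : Real.sqrt (2/(1+l)) ^ 2 = 2/(1+l) := Real.sq_sqrt (by positivity)
  have hN2 : N^2 = 2*l^2/(1+l) := by
    rw [hNdef, mul_pow, hq]
    ring
  have hNpos : 0 < N := mul_pos hlpos (Real.sqrt_pos.mpr (by positivity))
  have hNne : N ≠ 0 := ne_of_gt hNpos
  set x : Fin p → ℝ := fun i => (v i - c * u i) / N with hxd
  set y : Fin p → ℝ := fun i => (u i - c * v i) / N with hyd
  have hxi : ∀ i, x i = (v i - c * u i) / N := fun i => by rw [hxd]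
  have hyi : ∀ i, y i = (u i - c * v i) / N := fun i => by rw [hyd]
  -- sum identities
  have hsx : ∑ i, (v i - c*u i)^2 = N^2 := by
    have e : ∀ i, (v i - c*u i)^2 = v i^2 + c^2 * u i^2 - (u i * v i) * (2*c) :=
      fun i => by ring
    rw [Finset.sum_congr rfl fun i _ => e i, Finset.sum_sub_distrib, Finset.sum_add_distrib,
      ← Finset.mul_sum, ← Finset.sum_mul, hu, hv, ← ha, hN2, hc2]
    rw [show a * (2*c) = 2*(c*a) from by ring, hca]
    field_simp
    ring
  have hsy : ∑ i, (u i - c*v i)^2 = N^2 := by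
    have e : ∀ i, (u i - c*v i)^2 = u i^2 + c^2 * v i^2 - (u i * v i) * (2*c) :=
      fun i => by ring
    rw [Finset.sum_congr rfl fun i _ => e i, Finset.sum_sub_distrib, Finset.sum_add_distrib,
      ← Finset.mul_sum, ← Finset.sum_mul, hu, hv, ← ha, hN2, hc2]
    rw [show a * (2*c) = 2*(c*a) from by ring, hca]
    field_simp
    ring
  have hsxy : ∑ i, (v i - c*u i)*(u i - c*v i) = 0 := by
    have e : ∀ i, (v i - c*u i)*(u i - c*v i)
        = (u i * v i) * (1 + c^2) - c * u i^2 - c * v i^2 := fun i => by ring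
    rw [Finset.sum_congr rfl fun i _ => e i, Finset.sum_sub_distrib, Finset.sum_sub_distrib,
      ← Finset.sum_mul, ← Finset.mul_sum, ← Finset.mul_sum, hu, hv, ← ha, hc2]
    rw [hcdef]
    field_simp
    ring
  have hx1 : ∑ i, x i ^ 2 = 1 := by
    simp_rw [hxi, div_pow]
    rw [← Finset.sum_div, hsx, div_self (pow_ne_zero 2 hNne)]
  have hy1 : ∑ i, y i ^ 2 = 1 := by
    simp_rw [hyi, div_pow]
    rw [← Finset.sum_div, hsy, div_self (pow_ne_zero 2 hNne)]
  have hxy : ∑ i, x i * y i = 0 := by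
    simp_rw [hxi, hyi, div_mul_div_comm]
    rw [← Finset.sum_div, hsxy, zero_div]
  -- sqrt of norm
  have hS : Real.sqrt (∑ i, ∑ j, (v i * v j - u i * u j)^2) = Real.sqrt 2 * l := by
    rw [show ∑ i, ∑ j, (v i * v j - u i * u j)^2 = 2 * l^2 from by rw [hSe]; nlinarith,
      Real.sqrt_mul (by norm_num), Real.sqrt_sq hlpos.le]
  have h2ne : Real.sqrt 2 ≠ 0 := by positivity
  have hMij : ∀ i j, M i j = (Real.sqrt 2 * l)⁻¹ * (v i * v j - u i * u j) := by
    intro i j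
    rw [hM, hS]
    rfl
  -- entrywise key identity
  have hent : ∀ i j, M i j = (1/Real.sqrt 2) * (x i * x j - y i * y j) := by
    intro i j
    rw [hMij, hxi, hxi, hyi, hyi]
    rw [show (v i - c*u i)/N * ((v j - c*u j)/N) - (u i - c*v i)/N * ((u j - c*v j)/N)
        = (1 - c^2) * (v i * v j - u i * u j) / N^2 from by
      rw [div_mul_div_comm, div_mul_div_comm, div_sub_div_same, ← sq,
        show (v i - c*u i)*(v j - c*u j) - (u i - c*v i)*(u j - c*v j)
          = (1-c^2)*(v i*v j - u i*u j) from by ring]]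
    rw [hc2, hN2]
    field_simp [h2ne, hlne, h1l']
    ring
  -- trace
  have htr : M.trace = 0 := by
    rw [Matrix.trace]
    have : ∀ i, M.diag i = (Real.sqrt 2 * l)⁻¹ * (v i * v i - u i * u i) := fun i => hMij i i
    rw [Finset.sum_congr rfl fun i _ => this i, ← Finset.mul_sum, Finset.sum_sub_distrib]
    have e1 : ∑ i, v i * v i = 1 := by rw [← hv]; exact Finset.sum_congr rfl fun i _ => (sq (v i)).symm
    have e2 : ∑ i, u i * u i = 1 := by rw [← hu]; exact Finset.sum_congr rfl fun i _ => (sq (u i)).symm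
    rw [e1, e2]
    ring
  -- eigen equations
  have hmx : M.mulVec x = (1 / Real.sqrt 2) • x := by
    funext i
    rw [Matrix.mulVec, dotProduct]
    have e : ∀ j, M i j * x j = (1/Real.sqrt 2 * x i) * x j^2 - (1/Real.sqrt 2 * y i) * (x j * y j) := by
      intro j; rw [hent i j]; ring
    rw [Finset.sum_congr rfl fun j _ => e j, Finset.sum_sub_distrib, ← Finset.mul_sum,
      ← Finset.mul_sum, hx1, hxy]
    simp [Pi.smul_apply, smul_eq_mul]
  have hmy : M.mulVec y = (-(1 / Real.sqrt 2)) • y := by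
    funext i
    rw [Matrix.mulVec, dotProduct]
    have e : ∀ j, M i j * y j = (1/Real.sqrt 2 * x i) * (x j * y j) - (1/Real.sqrt 2 * y i) * y j^2 := by
      intro j; rw [hent i j]; ring
    rw [Finset.sum_congr rfl fun j _ => e j, Finset.sum_sub_distrib, ← Finset.mul_sum,
      ← Finset.mul_sum, hy1, hxy]
    simp [Pi.smul_apply, smul_eq_mul]
  -- matrix equation
  have hMeq : M = (1 / Real.sqrt 2) • (fun i j => x i * x j - y i * y j) := by
    ext i j
    rw [hent i j]
    simp [Matrix.smul_apply, smul_eq_mul]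
  -- linear independence
  have hli : LinearIndependent ℝ ![x, y] := by
    rw [LinearIndependent.pair_iff]
    intro s t hst
    have h0 : ∀ i, s * x i + t * y i = 0 := by
      intro i
      have := congrFun hst i
      simpa [Pi.add_apply, Pi.smul_apply, smul_eq_mul] using this
    constructor
    · have e : ∑ i, (s * x i + t * y i) * x i = s := by
        have e2 : ∀ i, (s * x i + t * y i) * x i = s * x i^2 + t * (x i * y i) := fun i => by ring
        rw [Finset.sum_congr rfl fun i _ => e2 i, Finset.sum_add_distrib, ← Finset.mul_sum,
          ← Finset.mul_sum, hx1, hxy]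
        ring
      rw [← e]
      exact Finset.sum_eq_zero fun i _ => by rw [h0 i, zero_mul]
    · have e : ∑ i, (s * x i + t * y i) * y i = t := by
        have e2 : ∀ i, (s * x i + t * y i) * y i = s * (x i * y i) + t * y i^2 := fun i => by ring
        rw [Finset.sum_congr rfl fun i _ => e2 i, Finset.sum_add_distrib, ← Finset.mul_sum,
          ← Finset.mul_sum, hy1, hxy]
        ring
      rw [← e]
      exact Finset.sum_eq_zero fun i _ => by rw [h0 i, zero_mul]
  -- rank
  have hrange : LinearMap.range M.mulVecLin = Submodule.span ℝ {x, y} := by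
    apply le_antisymm
    · rintro z ⟨w, rfl⟩
      rw [Submodule.mem_span_pair]
      refine ⟨1/Real.sqrt 2 * ∑ j, x j * w j, -(1/Real.sqrt 2 * ∑ j, y j * w j), ?_⟩
      funext i
      rw [Matrix.mulVecLin_apply, Matrix.mulVec, dotProduct]
      have e : ∀ j, M i j * w j
          = (1/Real.sqrt 2 * x i) * (x j * w j) - (1/Real.sqrt 2 * y i) * (y j * w j) := by
        intro j; rw [hent i j]; ring
      rw [Finset.sum_congr rfl fun j _ => e j, Finset.sum_sub_distrib, ← Finset.mul_sum,
        ← Finset.mul_sum]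
      simp [Pi.add_apply, Pi.smul_apply, smul_eq_mul]
      ring
    · rw [Submodule.span_le]
      intro z hz
      rcases hz with hz | hz
      · refine ⟨Real.sqrt 2 • x, ?_⟩
        rw [Matrix.mulVecLin_apply, Matrix.mulVec_smul, hmx, smul_smul]
        rw [show Real.sqrt 2 * (1/Real.sqrt 2) = 1 from by field_simp]
        rw [one_smul, hz]
      · simp only [Set.mem_singleton_iff] at hz
        refine ⟨(-(Real.sqrt 2)) • y, ?_⟩
        rw [Matrix.mulVecLin_apply, Matrix.mulVec_smul, hmy, smul_smul]
        rw [show -Real.sqrt 2 * -(1/Real.sqrt 2) = 1 from by field_simp]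
        rw [one_smul, hz]
  have hrank : M.rank = 2 := by
    rw [Matrix.rank, hrange]
    rw [show ({x, y} : Set (Fin p → ℝ)) = Set.range ![x, y] from by
      simp only [Matrix.range_cons, Matrix.range_empty, Set.union_empty,
        Set.union_singleton]
      exact Set.pair_comm x y]
    rw [finrank_span_eq_card hli]
    simp
  -- sparsity
  have hxcard : (Finset.univ.filter (fun j => x j ≠ 0)).card ≤ 2 * k := by
    have hsub : (Finset.univ.filter (fun j => x j ≠ 0))
        ⊆ (Finset.univ.filter (fun j => u j ≠ 0)) ∪ (Finset.univ.filter (fun j => v j ≠ 0)) := by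
      intro j hj
      simp only [Finset.mem_filter, Finset.mem_union, Finset.mem_univ, true_and] at hj ⊢
      by_contra h
      push_neg at h
      exact hj (by rw [hxi j, h.1, h.2]; simp)
    calc (Finset.univ.filter (fun j => x j ≠ 0)).card
        ≤ _ := Finset.card_le_card hsub
      _ ≤ (Finset.univ.filter (fun j => u j ≠ 0)).card
          + (Finset.univ.filter (fun j => v j ≠ 0)).card := Finset.card_union_le _ _
      _ ≤ 2 * k := by omega
  have hycard : (Finset.univ.filter (fun j => y j ≠ 0)).card ≤ 2 * k := by
    have hsub : (Finset.univ.filter (fun j => y j ≠ 0))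
        ⊆ (Finset.univ.filter (fun j => u j ≠ 0)) ∪ (Finset.univ.filter (fun j => v j ≠ 0)) := by
      intro j hj
      simp only [Finset.mem_filter, Finset.mem_union, Finset.mem_univ, true_and] at hj ⊢
      by_contra h
      push_neg at h
      exact hj (by rw [hyi j, h.1, h.2]; simp)
    calc (Finset.univ.filter (fun j => y j ≠ 0)).card
        ≤ _ := Finset.card_le_card hsub
      _ ≤ (Finset.univ.filter (fun j => u j ≠ 0)).card
          + (Finset.univ.filter (fun j => v j ≠ 0)).card := Finset.card_union_le _ _
      _ ≤ 2 * k := by omega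
  exact ⟨hrank, htr, x, y, hx1, hy1, hxcard, hycard, hxy, hmx, hmy, hMeq⟩
end

section
/- Let Σ ∈ ℝ^{p×p} be of the form Σ = σ²I_p + θ·uuᵀ for a unit vector u, σ² > 0 and θ > 0, and let v be another unit vector. Then the Kullback–Leibler divergence between N_p(0, σ²I_p + θvvᵀ) and N_p(0, σ²I_p + θuuᵀ) equals (θ²/(2σ²(σ²+θ)))·(1 - (uᵀv)²). -/
open Matrix MeasureTheory Finset Real

lemma KLaux.int_e : Integrable (fun x : ℝ => Real.exp (-x^2/2)) := by
  have := integrable_exp_neg_mul_sq (by norm_num : (0:ℝ) < 1/2)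
  convert this using 2 with x
  ring_nf

lemma KLaux.int_xe : Integrable (fun x : ℝ => x * Real.exp (-x^2/2)) := by
  have := integrable_mul_exp_neg_mul_sq (by norm_num : (0:ℝ) < 1/2)
  convert this using 2 with x
  ring_nf

lemma KLaux.int_x2e : Integrable (fun x : ℝ => x^2 * Real.exp (-x^2/2)) := by
  have := integrable_rpow_mul_exp_neg_mul_sq (by norm_num : (0:ℝ) < 1/2)
    (by norm_num : (-1:ℝ) < 2)
  convert this using 2 with x
  rw [show ((2:ℝ) = ((2:ℕ):ℝ)) by norm_num, Real.rpow_natCast]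
  ring_nf

lemma KLaux.g0 : ∫ x : ℝ, Real.exp (-x^2/2) = Real.sqrt (2*Real.pi) := by
  have := integral_gaussian (1/2 : ℝ)
  rw [show (fun x : ℝ => Real.exp (-x^2/2)) = (fun x : ℝ => Real.exp (-(1/2)*x^2)) by
    funext x; ring_nf]
  rw [this]
  norm_num [mul_comm]

lemma KLaux.g1 : ∫ x : ℝ, x * Real.exp (-x^2/2) = 0 := by
  apply integral_eq_zero_of_hasDerivAt_of_integrable
    (f := fun x : ℝ => -Real.exp (-x^2/2)) (f' := fun x : ℝ => x * Real.exp (-x^2/2))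
  · intro x
    have h1 : HasDerivAt (fun x : ℝ => -x^2/2) (-x) x := by
      have := ((hasDerivAt_pow 2 x).neg.div_const 2)
      simpa using this.congr_deriv (by ring)
    have := (h1.exp).neg
    exact this.congr_deriv (by ring)
  · exact KLaux.int_xe
  · exact KLaux.int_e.neg

lemma KLaux.g2 : ∫ x : ℝ, x^2 * Real.exp (-x^2/2) = Real.sqrt (2*Real.pi) := by
  have h0 : ∫ x : ℝ, (x^2 - 1) * Real.exp (-x^2/2) = 0 := by
    apply integral_eq_zero_of_hasDerivAt_of_integrable
      (f := fun x : ℝ => -(x * Real.exp (-x^2/2)))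
    · intro x
      have h1 : HasDerivAt (fun x : ℝ => -x^2/2) (-x) x := by
        have := ((hasDerivAt_pow 2 x).neg.div_const 2)
        simpa using this.congr_deriv (by ring)
      have h2 : HasDerivAt (fun x : ℝ => x * Real.exp (-x^2/2))
          (1 * Real.exp (-x^2/2) + x * (Real.exp (-x^2/2) * (-x))) x :=
        (hasDerivAt_id x).mul h1.exp
      have := h2.neg
      apply this.congr_deriv
      ring
    · have : Integrable (fun x : ℝ => x^2 * Real.exp (-x^2/2) - Real.exp (-x^2/2)) :=
        KLaux.int_x2e.sub KLaux.int_e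
      convert this using 2 with x
      ring
    · exact (KLaux.int_xe).neg
  have hsub := integral_sub KLaux.int_x2e KLaux.int_e
  rw [show (fun x : ℝ => x^2 * Real.exp (-x^2/2) - Real.exp (-x^2/2))
      = (fun x : ℝ => (x^2-1) * Real.exp (-x^2/2)) by funext x; ring] at hsub
  rw [h0, KLaux.g0] at hsub
  linarith


lemma KLaux.exp_prod {p : ℕ} (y : Fin p → ℝ) :
    Real.exp (-(∑ i, (y i)^2)/2) = ∏ i, Real.exp (-(y i)^2/2) := by
  rw [← Real.exp_sum]
  congr 1
  rw [← Finset.sum_div, ← Finset.sum_neg_distrib]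

lemma KLaux.prod_form {p : ℕ} (i j : Fin p) (y : Fin p → ℝ) :
    y i * y j * Real.exp (-(∑ k, (y k)^2)/2)
      = ∏ k, ((if i = k then y k else 1) * (if j = k then y k else 1)
          * Real.exp (-(y k)^2/2)) := by
  rw [Finset.prod_mul_distrib, Finset.prod_mul_distrib, Finset.prod_ite_eq, Finset.prod_ite_eq,
    ← KLaux.exp_prod]
  simp

lemma KLaux.gk_integrable {p : ℕ} (i j k : Fin p) :
    Integrable (fun t : ℝ => (if i = k then t else 1) * (if j = k then t else 1)
        * Real.exp (-t^2/2)) := by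
  by_cases hi : i = k <;> by_cases hj : j = k
  · simp only [if_pos hi, if_pos hj]
    simpa [pow_two, mul_assoc] using KLaux.int_x2e
  · simp only [if_pos hi, if_neg hj, mul_one]
    exact KLaux.int_xe
  · simp only [if_neg hi, if_pos hj, one_mul]
    exact KLaux.int_xe
  · simp only [if_neg hi, if_neg hj, one_mul]
    exact KLaux.int_e

lemma KLaux.integrable_term {p : ℕ} (i j : Fin p) :
    Integrable (fun y : Fin p → ℝ => y i * y j * Real.exp (-(∑ k, (y k)^2)/2)) := by
  have := Integrable.fintype_prod (E := ℝ)
    (f := fun k (t : ℝ) => (if i = k then t else 1) * (if j = k then t else 1)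
        * Real.exp (-t^2/2)) (fun k => KLaux.gk_integrable i j k)
  rw [show (fun y : Fin p → ℝ => y i * y j * Real.exp (-(∑ k, (y k)^2)/2)) = _ from
    funext (KLaux.prod_form i j)]
  exact this

lemma KLaux.moment_ij {p : ℕ} (i j : Fin p) :
    ∫ y : Fin p → ℝ, y i * y j * Real.exp (-(∑ k, (y k)^2)/2)
      = if i = j then Real.sqrt (2*Real.pi) ^ p else 0 := by
  simp_rw [KLaux.prod_form i j]
  rw [integral_fintype_prod_volume_eq_prod (f := fun k (t : ℝ) =>
    (if i = k then t else 1) * (if j = k then t else 1) * Real.exp (-t^2/2))]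
  by_cases hij : i = j
  · subst hij
    rw [if_pos rfl]
    have : ∀ k, (∫ t : ℝ, (if i = k then t else 1) * (if i = k then t else 1)
        * Real.exp (-t^2/2)) = Real.sqrt (2*Real.pi) := by
      intro k
      by_cases hk : i = k
      · simp only [if_pos hk]
        rw [← KLaux.g2]
        congr 1; funext t; ring
      · simp only [if_neg hk, one_mul]
        exact KLaux.g0
    rw [Finset.prod_congr rfl (fun k _ => this k), Finset.prod_const]
    simp
  · rw [if_neg hij]
    apply Finset.prod_eq_zero (Finset.mem_univ i)
    have hji : ¬ (j = i) := fun h => hij h.symm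
    simp only [if_pos rfl, if_neg hji, mul_one]
    exact KLaux.g1


lemma KLaux.integrable_moment {p : ℕ} (a b : Fin p → ℝ) :
    Integrable (fun y : Fin p → ℝ =>
      (∑ i, a i * y i) * (∑ i, b i * y i) * Real.exp (-(∑ k, (y k)^2)/2)) := by
  have : (fun y : Fin p → ℝ =>
      (∑ i, a i * y i) * (∑ i, b i * y i) * Real.exp (-(∑ k, (y k)^2)/2))
      = fun y => ∑ i, ∑ j, (a i * b j) * (y i * y j * Real.exp (-(∑ k, (y k)^2)/2)) := by
    funext y
    rw [Finset.sum_mul_sum]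
    rw [Finset.sum_mul]
    congr 1; funext i
    rw [Finset.sum_mul]
    congr 1; funext j
    ring
  rw [this]
  apply integrable_finset_sum
  intro i _
  apply integrable_finset_sum
  intro j _
  exact (KLaux.integrable_term i j).const_mul _

lemma KLaux.moment {p : ℕ} (a b : Fin p → ℝ) :
    ∫ y : Fin p → ℝ, (∑ i, a i * y i) * (∑ i, b i * y i) * Real.exp (-(∑ k, (y k)^2)/2)
      = (∑ i, a i * b i) * Real.sqrt (2*Real.pi) ^ p := by
  have h1 : (fun y : Fin p → ℝ =>
      (∑ i, a i * y i) * (∑ i, b i * y i) * Real.exp (-(∑ k, (y k)^2)/2))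
      = fun y => ∑ i, ∑ j, (a i * b j) * (y i * y j * Real.exp (-(∑ k, (y k)^2)/2)) := by
    funext y
    rw [Finset.sum_mul_sum, Finset.sum_mul]
    congr 1; funext i
    rw [Finset.sum_mul]
    congr 1; funext j
    ring
  rw [h1, integral_finset_sum _ (fun i _ => integrable_finset_sum _
    (fun j _ => (KLaux.integrable_term i j).const_mul _))]
  have h2 : ∀ i, (∫ y : Fin p → ℝ, ∑ j, (a i * b j) *
      (y i * y j * Real.exp (-(∑ k, (y k)^2)/2)))
      = a i * b i * Real.sqrt (2*Real.pi) ^ p := by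
    intro i
    rw [integral_finset_sum _ (fun j _ => (KLaux.integrable_term i j).const_mul _)]
    have : ∀ j, (∫ y : Fin p → ℝ, (a i * b j) * (y i * y j * Real.exp (-(∑ k, (y k)^2)/2)))
        = (a i * b j) * (if i = j then Real.sqrt (2*Real.pi) ^ p else 0) := by
      intro j
      rw [MeasureTheory.integral_const_mul, KLaux.moment_ij]
    rw [Finset.sum_congr rfl (fun j _ => this j)]
    simp [Finset.mul_sum, Finset.sum_ite_eq, mul_ite]
  rw [Finset.sum_congr rfl (fun i _ => h2 i), ← Finset.sum_mul]

lemma KLaux.gauss_pi (p : ℕ) :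
    ∫ y : Fin p → ℝ, Real.exp (-(∑ i, (y i)^2)/2) = Real.sqrt (2*Real.pi) ^ p := by
  simp_rw [KLaux.exp_prod]
  rw [MeasureTheory.integral_fintype_prod_volume_eq_pow (ι := Fin p) (fun t : ℝ => Real.exp (-t^2/2))]
  rw [KLaux.g0, Fintype.card_fin]

lemma KLaux.integral_comp_mulVec {p : ℕ} (M : Matrix (Fin p) (Fin p) ℝ) (hM : M.det ≠ 0)
    (F : (Fin p → ℝ) → ℝ) (hF : Continuous F) :
    ∫ y : Fin p → ℝ, F (M.mulVec y) = |M.det|⁻¹ * ∫ x, F x := by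
  have hf : LinearMap.det (Matrix.toLin' M) ≠ 0 := by
    rwa [LinearMap.det_toLin']
  have hmap := Real.map_linearMap_volume_pi_eq_smul_volume_pi hf
  have hcont : Continuous (Matrix.toLin' M) := LinearMap.continuous_of_finiteDimensional _
  have h1 : ∫ y : Fin p → ℝ, F (M.mulVec y)
      = ∫ x, F x ∂(Measure.map (Matrix.toLin' M) volume) := by
    rw [integral_map hcont.measurable.aemeasurable hF.aestronglyMeasurable]
    simp [Matrix.toLin'_apply]
  rw [h1, hmap, integral_smul_measure, LinearMap.det_toLin',
    ENNReal.toReal_ofReal (abs_nonneg _), abs_inv, smul_eq_mul]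


lemma KLaux.mulVec_spike {p : ℕ} (r s : ℝ) (w x : Fin p → ℝ) (i : Fin p) :
    ((r • (1 : Matrix (Fin p) (Fin p) ℝ) + s • Matrix.of (fun i j => w i * w j)).mulVec x) i
      = r * x i + s * w i * ∑ j, w j * x j := by
  simp only [Matrix.mulVec, dotProduct, Matrix.add_apply, Matrix.smul_apply, Matrix.one_apply,
    Matrix.of_apply, smul_eq_mul]
  have h : ∀ j ∈ Finset.univ, (r * (if i = j then (1:ℝ) else 0) + s * (w i * w j)) * x j
      = r * ((if i = j then (1:ℝ) else 0) * x j) + s * w i * (w j * x j) := by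
    intro j _; ring
  rw [Finset.sum_congr rfl h, Finset.sum_add_distrib]
  congr 1
  · rw [← Finset.mul_sum]
    simp [mul_ite, ite_mul, Finset.sum_ite_eq]
  · rw [← Finset.mul_sum]

lemma KLaux.quad_spike {p : ℕ} (r s : ℝ) (w x : Fin p → ℝ) :
    ∑ i, x i * ((r • (1 : Matrix (Fin p) (Fin p) ℝ)
        + s • Matrix.of (fun i j => w i * w j)).mulVec x) i
      = r * ∑ i, (x i)^2 + s * (∑ i, w i * x i)^2 := by
  rw [Finset.sum_congr rfl (fun i _ => by rw [KLaux.mulVec_spike])]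
  have : ∀ i, x i * (r * x i + s * w i * ∑ j, w j * x j)
      = r * (x i)^2 + s * (∑ j, w j * x j) * (w i * x i) := by
    intro i; ring
  rw [Finset.sum_congr rfl (fun i _ => this i), Finset.sum_add_distrib, ← Finset.mul_sum,
    ← Finset.mul_sum, pow_two]
  ring

lemma KLaux.WW {p : ℕ} (w : Fin p → ℝ) (hw : ∑ i, (w i)^2 = 1) :
    (Matrix.of (fun i j => w i * w j) : Matrix (Fin p) (Fin p) ℝ)
      * Matrix.of (fun i j => w i * w j) = Matrix.of (fun i j => w i * w j) := by
  ext i j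
  simp only [Matrix.mul_apply, Matrix.of_apply]
  rw [Finset.sum_congr rfl (fun l _ => by ring : ∀ l ∈ Finset.univ,
    w i * w l * (w l * w j) = w i * w j * (w l)^2), ← Finset.mul_sum, hw, mul_one]

lemma KLaux.spike_inv {p : ℕ} (σ θ : ℝ) (hσ : 0 < σ) (hθ : 0 < θ)
    (w : Fin p → ℝ) (hw : ∑ i, (w i)^2 = 1) :
    (σ^2 • (1 : Matrix (Fin p) (Fin p) ℝ) + θ • Matrix.of (fun i j => w i * w j))⁻¹
      = (σ^2)⁻¹ • (1 : Matrix (Fin p) (Fin p) ℝ)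
        + (-(θ/(σ^2*(σ^2+θ)))) • Matrix.of (fun i j => w i * w j) := by
  apply Matrix.inv_eq_right_inv
  set W : Matrix (Fin p) (Fin p) ℝ := Matrix.of (fun i j => w i * w j) with hW
  have hWW : W * W = W := KLaux.WW w hw
  rw [Matrix.add_mul, Matrix.mul_add, Matrix.mul_add]
  simp only [Matrix.smul_mul, Matrix.mul_smul, Matrix.one_mul, Matrix.mul_one, ← hW, hWW,
    smul_smul]
  have h1 : (σ^2)⁻¹ * σ^2 = 1 := by
    field_simp
  have h2 : (-(θ/(σ^2*(σ^2+θ)))) * σ^2 + ((σ^2)⁻¹ * θ + (-(θ/(σ^2*(σ^2+θ)))) * θ) = 0 := by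
    have hs : σ^2 ≠ 0 := by positivity
    have hst : σ^2 + θ ≠ 0 := by positivity
    field_simp
    ring
  rw [h1, one_smul, add_assoc, ← add_smul, ← add_smul, h2, zero_smul, add_zero]

lemma KLaux.spike_det {p : ℕ} (r s : ℝ) (hr : r ≠ 0)
    (w : Fin p → ℝ) (hw : ∑ i, (w i)^2 = 1) :
    (r • (1 : Matrix (Fin p) (Fin p) ℝ) + s • Matrix.of (fun i j => w i * w j)).det
      = r^p * (1 + s/r) := by
  have h1 : r • (1 : Matrix (Fin p) (Fin p) ℝ) + s • Matrix.of (fun i j => w i * w j)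
      = r • ((1 : Matrix (Fin p) (Fin p) ℝ)
        + Matrix.replicateCol Unit (fun i => (s/r) * w i) * Matrix.replicateRow Unit w) := by
    rw [smul_add]
    congr 1
    ext i j
    simp only [Matrix.smul_apply, Matrix.mul_apply, Matrix.replicateCol_apply, Matrix.replicateRow_apply,
      Matrix.of_apply, smul_eq_mul, Finset.univ_unique, Finset.sum_singleton]
    field_simp
  rw [h1, Matrix.det_smul, Matrix.det_one_add_replicateCol_mul_replicateRow]
  have : (w ⬝ᵥ fun i => s/r * w i) = s/r := by
    simp only [dotProduct]
    rw [Finset.sum_congr rfl (fun i _ => by ring : ∀ i ∈ Finset.univ,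
      w i * (s/r * w i) = (s/r) * (w i)^2), ← Finset.mul_sum, hw, mul_one]
  rw [this]
  simp [Fintype.card_fin]


set_option maxHeartbeats 1000000 in
/-- KL divergence between the spiked Gaussians `N_p(0, σ²I + θvvᵀ)` and `N_p(0, σ²I + θuuᵀ)`
equals `θ²/(2σ²(σ²+θ)) (1 - (uᵀv)²)`, expressed via Lebesgue densities. -/
theorem stmt_6 (p : ℕ) (σ θ : ℝ) (hσ : 0 < σ) (hθ : 0 < θ)
    (u v : Fin p → ℝ) (hu : ∑ i, u i ^ 2 = 1) (hv : ∑ i, v i ^ 2 = 1)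
    (Su Sv : Matrix (Fin p) (Fin p) ℝ)
    (hSu : Su = σ ^ 2 • (1 : Matrix (Fin p) (Fin p) ℝ) + θ • Matrix.of (fun i j => u i * u j))
    (hSv : Sv = σ ^ 2 • (1 : Matrix (Fin p) (Fin p) ℝ) + θ • Matrix.of (fun i j => v i * v j))
    (fu fv : (Fin p → ℝ) → ℝ)
    (hfu : fu = fun x => ((2 * Real.pi) ^ p * Su.det) ^ (-(1:ℝ)/2) *
      Real.exp (-(∑ i, x i * (Su⁻¹).mulVec x i) / 2))
    (hfv : fv = fun x => ((2 * Real.pi) ^ p * Sv.det) ^ (-(1:ℝ)/2) *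
      Real.exp (-(∑ i, x i * (Sv⁻¹).mulVec x i) / 2)) :
    ∫ x : Fin p → ℝ, fv x * Real.log (fv x / fu x)
      = θ ^ 2 / (2 * σ ^ 2 * (σ ^ 2 + θ)) * (1 - (∑ i, u i * v i) ^ 2) := by
  have hσ2 : (0:ℝ) < σ^2 := by positivity
  have hσθ : (0:ℝ) < σ^2 + θ := by positivity
  set c : ℝ := ∑ i, u i * v i with hc
  set k : ℝ := θ / (σ^2 * (σ^2 + θ)) with hk
  set t : ℝ := Real.sqrt (σ^2 + θ) with htdef
  have ht : 0 < t := Real.sqrt_pos.2 hσθ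
  have ht2 : t^2 = σ^2 + θ := Real.sq_sqrt hσθ.le
  set N : ℝ := Real.sqrt (2*Real.pi) ^ p with hN
  set D : ℝ := (σ^2)^p * (1 + θ/σ^2) with hD
  set A : ℝ := (2*Real.pi)^p * D with hA
  set C : ℝ := A ^ (-(1:ℝ)/2) with hC
  have hDpos : 0 < D := by
    apply mul_pos (pow_pos hσ2 p); positivity
  have hApos : 0 < A := by
    apply mul_pos (pow_pos (by positivity) p) hDpos
  have hCpos : 0 < C := Real.rpow_pos_of_pos hApos _
  -- determinants
  have hdetu : Su.det = D := by
    rw [hSu, KLaux.spike_det (σ^2) θ (ne_of_gt hσ2) u hu]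
  have hdetv : Sv.det = D := by
    rw [hSv, KLaux.spike_det (σ^2) θ (ne_of_gt hσ2) v hv]
  -- quadratic forms
  have hquadu : ∀ x : Fin p → ℝ, ∑ i, x i * (Su⁻¹).mulVec x i
      = (σ^2)⁻¹ * ∑ i, (x i)^2 - k * (∑ i, u i * x i)^2 := by
    intro x
    rw [hSu, KLaux.spike_inv σ θ hσ hθ u hu, KLaux.quad_spike]
    rw [hk]; ring
  have hquadv : ∀ x : Fin p → ℝ, ∑ i, x i * (Sv⁻¹).mulVec x i
      = (σ^2)⁻¹ * ∑ i, (x i)^2 - k * (∑ i, v i * x i)^2 := by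
    intro x
    rw [hSv, KLaux.spike_inv σ θ hσ hθ v hv, KLaux.quad_spike]
    rw [hk]; ring
  -- rewrite densities
  have hfu' : ∀ x, fu x = C * Real.exp
      (-((σ^2)⁻¹ * ∑ i, (x i)^2 - k * (∑ i, u i * x i)^2)/2) := by
    intro x; rw [hfu]; simp only []
    rw [hdetu, hquadu x, ← hA, ← hC]
  have hfv' : ∀ x, fv x = C * Real.exp
      (-((σ^2)⁻¹ * ∑ i, (x i)^2 - k * (∑ i, v i * x i)^2)/2) := by
    intro x; rw [hfv]; simp only []
    rw [hdetv, hquadv x, ← hA, ← hC]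
  -- the simplified integrand
  set F : (Fin p → ℝ) → ℝ := fun x =>
    C * Real.exp (-((σ^2)⁻¹ * ∑ i, (x i)^2 - k * (∑ i, v i * x i)^2)/2)
      * (k/2 * ((∑ i, v i * x i)^2 - (∑ i, u i * x i)^2)) with hF
  have hpt : ∀ x, fv x * Real.log (fv x / fu x) = F x := by
    intro x
    rw [hfu' x, hfv' x]
    have hratio : C * Real.exp (-((σ^2)⁻¹ * ∑ i, (x i)^2 - k * (∑ i, v i * x i)^2)/2)
        / (C * Real.exp (-((σ^2)⁻¹ * ∑ i, (x i)^2 - k * (∑ i, u i * x i)^2)/2))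
        = Real.exp (k/2 * ((∑ i, v i * x i)^2 - (∑ i, u i * x i)^2)) := by
      rw [mul_div_mul_left _ _ (ne_of_gt hCpos), ← Real.exp_sub]
      congr 1; ring
    rw [hratio, Real.log_exp, hF]
  simp_rw [hpt]
  -- change of variables
  set T : Matrix (Fin p) (Fin p) ℝ :=
    σ • (1 : Matrix (Fin p) (Fin p) ℝ) + (t - σ) • Matrix.of (fun i j => v i * v j) with hT
  have hdetT : T.det = σ^p * t / σ := by
    rw [hT, KLaux.spike_det σ (t - σ) (ne_of_gt hσ) v hv]
    field_simp
    ring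
  have hdetTpos : 0 < T.det := by
    rw [hdetT]; positivity
  have hcont : Continuous F := by
    have hS : Continuous fun x : Fin p → ℝ => ∑ i, (x i)^2 :=
      continuous_finset_sum _ (fun i _ => (continuous_apply i).pow 2)
    have hV : Continuous fun x : Fin p → ℝ => ∑ i, v i * x i :=
      continuous_finset_sum _ (fun i _ => continuous_const.mul (continuous_apply i))
    have hU : Continuous fun x : Fin p → ℝ => ∑ i, u i * x i :=
      continuous_finset_sum _ (fun i _ => continuous_const.mul (continuous_apply i))
    exact (continuous_const.mul (Real.continuous_exp.comp
      (((continuous_const.mul hS).sub (continuous_const.mul (hV.pow 2))).neg.div_const 2))).mul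
      (continuous_const.mul ((hV.pow 2).sub (hU.pow 2)))
  have hcv : ∫ x, F x = |T.det| * ∫ y, F (T.mulVec y) := by
    rw [KLaux.integral_comp_mulVec T (ne_of_gt hdetTpos) F hcont, ← mul_assoc,
      mul_inv_cancel₀ (abs_ne_zero.2 (ne_of_gt hdetTpos)), one_mul]
  rw [hcv]
  -- compute F (T.mulVec y)
  have hVT : ∀ y : Fin p → ℝ, ∑ i, v i * (T.mulVec y) i = t * ∑ j, v j * y j := by
    intro y
    rw [Finset.sum_congr rfl (fun i _ => by rw [hT, KLaux.mulVec_spike])]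
    have h : ∀ i ∈ Finset.univ, v i * (σ * y i + (t - σ) * v i * ∑ j, v j * y j)
        = σ * (v i * y i) + (t - σ) * (∑ j, v j * y j) * (v i)^2 := by
      intro i _; ring
    rw [Finset.sum_congr rfl h, Finset.sum_add_distrib, ← Finset.mul_sum, ← Finset.mul_sum, hv]
    ring
  have hUT : ∀ y : Fin p → ℝ, ∑ i, u i * (T.mulVec y) i
      = σ * (∑ i, u i * y i) + (t - σ) * c * ∑ j, v j * y j := by
    intro y
    rw [Finset.sum_congr rfl (fun i _ => by rw [hT, KLaux.mulVec_spike])]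
    have h : ∀ i ∈ Finset.univ, u i * (σ * y i + (t - σ) * v i * ∑ j, v j * y j)
        = σ * (u i * y i) + (t - σ) * (∑ j, v j * y j) * (u i * v i) := by
      intro i _; ring
    rw [Finset.sum_congr rfl h, Finset.sum_add_distrib, ← Finset.mul_sum, ← Finset.mul_sum, ← hc]
    ring
  have hST : ∀ y : Fin p → ℝ, ∑ i, ((T.mulVec y) i)^2
      = σ^2 * ∑ i, (y i)^2 + (t^2 - σ^2) * (∑ j, v j * y j)^2 := by
    intro y
    rw [Finset.sum_congr rfl (fun i _ => by rw [hT, KLaux.mulVec_spike])]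
    have h : ∀ i ∈ Finset.univ, (σ * y i + (t - σ) * v i * ∑ j, v j * y j)^2
        = σ^2 * (y i)^2 + (2*σ*(t-σ)*(∑ j, v j * y j)) * (v i * y i)
          + ((t-σ)^2*(∑ j, v j * y j)^2) * (v i)^2 := by
      intro i _; ring
    rw [Finset.sum_congr rfl h, Finset.sum_add_distrib, Finset.sum_add_distrib,
      ← Finset.mul_sum, ← Finset.mul_sum, ← Finset.mul_sum, hv]
    ring
  have hFT : ∀ y : Fin p → ℝ, F (T.mulVec y)
      = C * (k/2) * ((t^2 - (t-σ)^2*c^2) * ((∑ i, v i * y i) * (∑ i, v i * y i)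
            * Real.exp (-(∑ i, (y i)^2)/2))
        - σ^2 * ((∑ i, u i * y i) * (∑ i, u i * y i) * Real.exp (-(∑ i, (y i)^2)/2))
        - (2*σ*(t-σ)*c) * ((∑ i, u i * y i) * (∑ i, v i * y i)
            * Real.exp (-(∑ i, (y i)^2)/2))) := by
    intro y
    rw [hF]
    simp only []
    rw [hVT y, hUT y, hST y]
    have hexp : -((σ^2)⁻¹ * (σ^2 * ∑ i, (y i)^2 + (t^2 - σ^2) * (∑ j, v j * y j)^2)
        - k * (t * ∑ j, v j * y j)^2)/2 = -(∑ i, (y i)^2)/2 := by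
      have e1 : (σ^2)⁻¹ * (σ^2 * ∑ i, (y i)^2 + (t^2 - σ^2) * (∑ j, v j * y j)^2)
          = ∑ i, (y i)^2 + (σ^2)⁻¹ * (t^2 - σ^2) * (∑ j, v j * y j)^2 := by
        field_simp
      have e2 : k * (t * ∑ j, v j * y j)^2
          = (σ^2)⁻¹ * (t^2 - σ^2) * (∑ j, v j * y j)^2 := by
        rw [mul_pow, hk, ht2]
        field_simp
        ring
      rw [e1, e2]
      ring
    rw [hexp]
    ring
  simp_rw [hFT]
  rw [MeasureTheory.integral_const_mul]
  have hsplit : ∫ y : Fin p → ℝ,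
      ((t^2 - (t-σ)^2*c^2) * ((∑ i, v i * y i) * (∑ i, v i * y i)
            * Real.exp (-(∑ i, (y i)^2)/2))
        - σ^2 * ((∑ i, u i * y i) * (∑ i, u i * y i) * Real.exp (-(∑ i, (y i)^2)/2))
        - (2*σ*(t-σ)*c) * ((∑ i, u i * y i) * (∑ i, v i * y i)
            * Real.exp (-(∑ i, (y i)^2)/2)))
      = (t^2 - (t-σ)^2*c^2) * (1 * N) - σ^2 * (1 * N) - (2*σ*(t-σ)*c) * (c * N) := by
    have I1 : Integrable (fun y : Fin p → ℝ => (t^2 - (t-σ)^2*c^2)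
        * ((∑ i, v i * y i) * (∑ i, v i * y i) * Real.exp (-(∑ i, (y i)^2)/2))) :=
      (KLaux.integrable_moment v v).const_mul _
    have I2 : Integrable (fun y : Fin p → ℝ => σ^2
        * ((∑ i, u i * y i) * (∑ i, u i * y i) * Real.exp (-(∑ i, (y i)^2)/2))) :=
      (KLaux.integrable_moment u u).const_mul _
    have I3 : Integrable (fun y : Fin p → ℝ => (2*σ*(t-σ)*c)
        * ((∑ i, u i * y i) * (∑ i, v i * y i) * Real.exp (-(∑ i, (y i)^2)/2))) :=
      (KLaux.integrable_moment u v).const_mul _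
    have I12 : Integrable (fun y : Fin p → ℝ => (t^2 - (t-σ)^2*c^2)
        * ((∑ i, v i * y i) * (∑ i, v i * y i) * Real.exp (-(∑ i, (y i)^2)/2))
        - σ^2 * ((∑ i, u i * y i) * (∑ i, u i * y i) * Real.exp (-(∑ i, (y i)^2)/2))) :=
      I1.sub I2
    have s1 := MeasureTheory.integral_sub I12 I3
    have s2 := MeasureTheory.integral_sub I1 I2
    rw [s1, s2, MeasureTheory.integral_const_mul, MeasureTheory.integral_const_mul,
      MeasureTheory.integral_const_mul, KLaux.moment, KLaux.moment, KLaux.moment]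
    have hvv : ∑ i, v i * v i = 1 := by
      rw [Finset.sum_congr rfl (fun i _ => (pow_two (v i)).symm), hv]
    have huu : ∑ i, u i * u i = 1 := by
      rw [Finset.sum_congr rfl (fun i _ => (pow_two (u i)).symm), hu]
    rw [hvv, huu, ← hc, ← hN]
  rw [hsplit]
  -- final arithmetic
  have hN2 : N^2 = (2*Real.pi)^p := by
    rw [hN, ← pow_mul, mul_comm p 2, pow_mul, Real.sq_sqrt (by positivity : (0:ℝ) ≤ 2*Real.pi)]
  have hNpos : 0 < N := pow_pos (Real.sqrt_pos.2 (by positivity)) p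
  have habs : |T.det| = σ^p * t / σ := by rw [abs_of_pos hdetTpos, hdetT]
  have hX0pos : 0 < σ^p * t / σ * N := by positivity
  have hX0sq : (σ^p * t / σ * N)^2 = A := by
    rw [hA, hD]
    have h1 : (σ^p * t / σ * N)^2 = (σ^p)^2 * t^2 * N^2 / σ^2 := by ring
    have h2 : (σ^p)^2 = (σ^2)^p := by rw [← pow_mul, mul_comm, pow_mul]
    rw [h1, ht2, hN2, h2]
    field_simp
  have hCX : C * (σ^p * t / σ * N) = 1 := by
    rw [hC, show (-(1:ℝ)/2) = -(1/2) by norm_num, Real.rpow_neg hApos.le, ← hX0sq]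
    have h12 : ((σ^p * t / σ * N)^2 : ℝ) ^ ((1:ℝ)/2) = σ^p * t / σ * N := by
      rw [← Real.rpow_natCast (σ^p * t / σ * N) 2, ← Real.rpow_mul hX0pos.le]
      norm_num
    rw [h12, inv_mul_cancel₀ (ne_of_gt hX0pos)]
  have hgoal : (t^2 - (t-σ)^2*c^2) * (1 * N) - σ^2 * (1 * N) - (2*σ*(t-σ)*c) * (c * N)
      = θ * (1 - c^2) * N := by
    have hθt : θ = t^2 - σ^2 := by rw [ht2]; ring
    rw [hθt]; ring
  rw [hgoal]
  rw [habs]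
  have : σ^p * t / σ * (C * (k/2) * (θ * (1 - c^2) * N))
      = (C * (σ^p * t / σ * N)) * (k/2 * θ * (1 - c^2)) := by ring
  rw [this, hCX, one_mul, hk]
  field_simp
end

section
/- Let v ∈ ℝ^p be a unit vector with at most k nonzero entries, supported on S, and let v̂ ∈ ℝ^p be any unit vector. Let Ŝ be any set of k indices containing the k largest coordinates of v̂ in absolute value. Then 1 - (v̂ᵀv)² ≥ (1/2)·Σ_{j ∈ S \ Ŝ} vⱼ². -/
open Finset
open scoped Classical

/-- Support recovery lemma: if `Ŝ` contains the `k` largest coordinates of `v̂` in absolute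
value, then `1 - (v̂ᵀv)² ≥ (1/2) Σ_{j ∈ S \ Ŝ} vⱼ²`. -/
theorem stmt_8 (p k : ℕ) (v vhat : Fin p → ℝ)
    (hv : ∑ i, v i ^ 2 = 1) (hvhat : ∑ i, vhat i ^ 2 = 1)
    (hv0 : (Finset.univ.filter (fun j => v j ≠ 0)).card ≤ k)
    (Shat : Finset (Fin p)) (hcard : Shat.card = k)
    (htop : ∀ i ∈ Shat, ∀ j ∉ Shat, |vhat j| ≤ |vhat i|) :
    (1 / 2) * ∑ j ∈ (Finset.univ.filter (fun j => v j ≠ 0)) \ Shat, v j ^ 2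
      ≤ 1 - (∑ i, vhat i * v i) ^ 2 := by
  classical
  set S := Finset.univ.filter (fun j => v j ≠ 0) with hSdef
  set A := S \ Shat with hAdef
  set B := S ∩ Shat with hBdef
  -- restrict sums to support
  have hrestr : ∀ f : Fin p → ℝ, (∀ j, v j = 0 → f j = 0) → ∑ j ∈ S, f j = ∑ i, f i := by
    intro f hf
    rw [hSdef]
    exact Finset.sum_filter_of_ne (fun x _ hx h0 => hx (hf x h0))
  have hvS : ∑ j ∈ S, v j ^ 2 = 1 := by
    rw [hrestr (fun j => v j ^ 2) (fun j h0 => by simp [h0]), hv]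
  have hcS : ∑ j ∈ S, vhat j * v j = ∑ i, vhat i * v i := by
    exact hrestr (fun j => vhat j * v j) (fun j h0 => by simp [h0])
  have hdisjAB : Disjoint A B := disjoint_sdiff_inter S Shat
  have hunionAB : A ∪ B = S := sdiff_union_inter S Shat
  have hsplit : ∀ f : Fin p → ℝ, ∑ j ∈ S, f j = ∑ j ∈ A, f j + ∑ j ∈ B, f j := by
    intro f; rw [← hunionAB, Finset.sum_union hdisjAB]
  set a := ∑ j ∈ A, v j ^ 2 with hadef
  set t := ∑ j ∈ A, vhat j ^ 2 with htdef
  set b2 := ∑ j ∈ B, vhat j ^ 2 with hb2def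
  set x := ∑ j ∈ A, vhat j * v j with hxdef
  set y := ∑ j ∈ B, vhat j * v j with hydef
  have hBa : ∑ j ∈ B, v j ^ 2 = 1 - a := by
    have := hsplit (fun j => v j ^ 2)
    rw [hvS] at this; linarith
  have hc : ∑ i, vhat i * v i = x + y := by rw [← hcS, hsplit]
  -- Cauchy–Schwarz
  have hx2 : x ^ 2 ≤ t * a := Finset.sum_mul_sq_le_sq_mul_sq A vhat v
  have hy2 : y ^ 2 ≤ b2 * (1 - a) := by
    have := Finset.sum_mul_sq_le_sq_mul_sq B vhat v
    rwa [hBa] at this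
  have ha0 : 0 ≤ a := Finset.sum_nonneg (fun j _ => sq_nonneg _)
  have ht0 : 0 ≤ t := Finset.sum_nonneg (fun j _ => sq_nonneg _)
  have hb20 : 0 ≤ b2 := Finset.sum_nonneg (fun j _ => sq_nonneg _)
  have ha1 : a ≤ 1 := by
    rw [← hvS]
    exact Finset.sum_le_sum_of_subset_of_nonneg (sdiff_subset) (fun j _ _ => sq_nonneg _)
  -- the injection argument: t ≤ ∑ over a subset C of Shat \ S
  have hcardle : A.card ≤ (Shat \ S).card := by
    have h1 : (S \ Shat).card + (S ∩ Shat).card = S.card := card_sdiff_add_card_inter S Shat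
    have h2 : (Shat \ S).card + (Shat ∩ S).card = Shat.card := card_sdiff_add_card_inter Shat S
    have h3 : (S ∩ Shat).card = (Shat ∩ S).card := by rw [Finset.inter_comm]
    have h4 : A.card = (S \ Shat).card := rfl
    have h5 : S.card ≤ k := hv0
    omega
  obtain ⟨C, hCsub, hCcard⟩ := Finset.exists_subset_card_eq hcardle
  have hkey : ∀ j ∈ A, ∀ i ∈ C, vhat j ^ 2 ≤ vhat i ^ 2 := by
    intro j hj i hi
    have hiS : i ∈ Shat := (Finset.mem_sdiff.mp (hCsub hi)).1
    have hjS : j ∉ Shat := (Finset.mem_sdiff.mp hj).2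
    have := htop i hiS j hjS
    calc vhat j ^ 2 = |vhat j| ^ 2 := (sq_abs _).symm
      _ ≤ |vhat i| ^ 2 := by exact pow_le_pow_left₀ (abs_nonneg _) this 2
      _ = vhat i ^ 2 := sq_abs _
  have htC : t ≤ ∑ i ∈ C, vhat i ^ 2 := by
    rcases A.eq_empty_or_nonempty with hA | hA
    · rw [htdef, hA]
      simp
      exact Finset.sum_nonneg (fun j _ => sq_nonneg _)
    · have hC : C.Nonempty := by
        rw [← Finset.card_pos, hCcard, Finset.card_pos]; exact hA
      set m := C.inf' hC (fun i => vhat i ^ 2) with hmdef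
      have h1 : t ≤ A.card • m := by
        apply Finset.sum_le_card_nsmul
        intro j hj
        exact Finset.le_inf' hC _ (fun i hi => hkey j hj i hi)
      have h2 : C.card • m ≤ ∑ i ∈ C, vhat i ^ 2 := by
        apply Finset.card_nsmul_le_sum
        intro i hi
        exact Finset.inf'_le _ hi
      rw [← hCcard] at h1
      linarith
  -- b2 + 2t ≤ 1
  have hcon : b2 + 2 * t ≤ 1 := by
    have hdisj1 : Disjoint A C := by
      apply Finset.disjoint_left.mpr
      intro j hj hjC
      exact (Finset.mem_sdiff.mp hj).2 (Finset.mem_sdiff.mp (hCsub hjC)).1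
    have hdisj2 : Disjoint B C := by
      apply Finset.disjoint_left.mpr
      intro j hj hjC
      exact (Finset.mem_sdiff.mp (hCsub hjC)).2 (Finset.mem_inter.mp hj).1
    have hdisj3 : Disjoint (A ∪ B) C := Finset.disjoint_union_left.mpr ⟨hdisj1, hdisj2⟩
    have hsum : ∑ j ∈ (A ∪ B) ∪ C, vhat j ^ 2 ≤ 1 := by
      rw [← hvhat]
      exact Finset.sum_le_sum_of_subset_of_nonneg (Finset.subset_univ _)
        (fun j _ _ => sq_nonneg _)
    rw [Finset.sum_union hdisj3, Finset.sum_union hdisjAB] at hsum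
    linarith
  -- final algebra
  rw [hc]
  have h2xy : 2 * x * y ≤ 2 * t * (1 - a) + b2 * a / 2 := by
    have hprod : x ^ 2 * y ^ 2 ≤ (t * a) * (b2 * (1 - a)) :=
      mul_le_mul hx2 hy2 (sq_nonneg _) (mul_nonneg ht0 ha0)
    nlinarith [sq_nonneg (2 * t * (1 - a) - b2 * a / 2), sq_nonneg (x * y),
      mul_nonneg ht0 (by linarith : (0:ℝ) ≤ 1 - a), mul_nonneg hb20 ha0,
      sq_nonneg (2 * t * (1 - a) + b2 * a / 2 - 2 * x * y)]
  nlinarith [hx2, hy2, h2xy, hcon, ha0, ha1, ht0, hb20,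
    mul_nonneg (mul_nonneg ht0 ha0) hb20]
end

section
/- Let Σ, Σ̂ ∈ ℝ^{p×p} be symmetric with Σ positive semidefinite, eigengap θ := λ₁(Σ) - λ₂(Σ) > 0 and unit leading eigenvector v with ‖v‖₀ ≤ k supported on S. Let λ > 0, ε ≥ 0, suppose ‖Σ̂ - Σ‖_∞ ≤ λ, and let M̂ be a symmetric positive semidefinite matrix with tr(M̂) = 1 satisfying tr(Σ̂M̂) - λ‖M̂‖₁ ≥ max_{M ∈ M₁}(tr(Σ̂M) - λ‖M‖₁) - ε, where M₁ is the set of p×p PSD matrices with unit trace. Then ‖vvᵀ - M̂‖₂ ≤ 4λk/θ + √(2ε/θ). -/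
open Matrix Finset
open scoped Classical

private lemma aux_trace_mul {p : ℕ} (A B : Matrix (Fin p) (Fin p) ℝ) :
    (A * B).trace = ∑ i, ∑ j, A i j * B j i := by
  simp [Matrix.trace, Matrix.mul_apply, Matrix.diag]

private lemma aux_psd_entry {p : ℕ} {M : Matrix (Fin p) (Fin p) ℝ} (hM : M.PosSemidef)
    (i j : Fin p) : M i j ^ 2 ≤ M i i * M j j := by
  obtain ⟨B, rfl⟩ := (show ∃ B : Matrix (Fin p) (Fin p) ℝ, M = Bᴴ * B from by
    open scoped MatrixOrder in exact CStarAlgebra.nonneg_iff_eq_star_mul_self.mp hM.nonneg)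
  have h : ∀ a b : Fin p, (Bᴴ * B) a b = ∑ k, B k a * B k b := by
    intro a b; simp [Matrix.mul_apply, Matrix.conjTranspose_apply, mul_comm]
  rw [h, h, h]
  calc (∑ k, B k i * B k j) ^ 2 ≤ (∑ k, B k i ^ 2) * ∑ k, B k j ^ 2 :=
        Finset.sum_mul_sq_le_sq_mul_sq _ _ _
    _ = (∑ k, B k i * B k i) * ∑ k, B k j * B k j := by simp [sq]

private lemma aux_psd_trace_nonneg {p : ℕ} {A B : Matrix (Fin p) (Fin p) ℝ}
    (hA : A.PosSemidef) (hB : B.PosSemidef) : 0 ≤ (A * B).trace := by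
  obtain ⟨C, rfl⟩ := (show ∃ C : Matrix (Fin p) (Fin p) ℝ, A = Cᴴ * C from by
    open scoped MatrixOrder in exact CStarAlgebra.nonneg_iff_eq_star_mul_self.mp hA.nonneg)
  rw [Matrix.mul_assoc, Matrix.trace_mul_comm]
  have h : ∀ i, 0 ≤ (C * B * Cᴴ) i i := by
    intro i
    have h2 := hB.dotProduct_mulVec_nonneg (fun j => C i j)
    simp only [star_trivial] at h2
    refine le_of_le_of_eq h2 (Eq.symm ?_)
    simp only [Matrix.mul_apply, Matrix.conjTranspose_apply, Matrix.mulVec,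
      dotProduct, star_trivial, Finset.sum_mul, Finset.mul_sum]
    rw [Finset.sum_comm]
    exact Finset.sum_congr rfl fun k _ => Finset.sum_congr rfl fun j _ => by ring
  exact Finset.sum_nonneg fun i _ => h i

private lemma aux_final (d A b : ℝ) (hA : 0 ≤ A) (hb : 0 ≤ b)
    (h : d ^ 2 ≤ A * d + b) : d ≤ A + Real.sqrt b := by
  have hs : Real.sqrt b ^ 2 = b := Real.sq_sqrt hb
  have hs0 : 0 ≤ Real.sqrt b := Real.sqrt_nonneg b
  nlinarith [mul_nonneg hA hs0, sq_nonneg (d - Real.sqrt b)]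

private lemma aux_sum3 {p : ℕ} (f g h : Fin p → Fin p → ℝ) :
    (∑ i, ∑ j, f i j) - (∑ i, ∑ j, g i j) + (∑ i, ∑ j, h i j)
      = ∑ i, ∑ j, (f i j - g i j + h i j) := by
  rw [← Finset.sum_sub_distrib, ← Finset.sum_add_distrib]
  exact Finset.sum_congr rfl fun i _ => by
    rw [← Finset.sum_sub_distrib, ← Finset.sum_add_distrib]

private lemma aux_sum4 {p : ℕ} (f g h k : Fin p → Fin p → ℝ) :
    (∑ i, ∑ j, f i j) - (∑ i, ∑ j, g i j) - ((∑ i, ∑ j, h i j) - (∑ i, ∑ j, k i j))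
      = ∑ i, ∑ j, (f i j - g i j - (h i j - k i j)) := by
  rw [← Finset.sum_sub_distrib, ← Finset.sum_sub_distrib, ← Finset.sum_sub_distrib]
  exact Finset.sum_congr rfl fun i _ => by
    rw [← Finset.sum_sub_distrib, ← Finset.sum_sub_distrib, ← Finset.sum_sub_distrib]

set_option maxHeartbeats 1000000

/-- Deterministic SDP bound: if `‖Σ̂ - Σ‖_∞ ≤ λ` and `M̂` is an ε-maximiser of
`tr(Σ̂M) - λ‖M‖₁` over PSD unit-trace matrices, then
`‖vvᵀ - M̂‖₂ ≤ 4λk/θ + √(2ε/θ)`. -/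
theorem stmt_10 (p k : ℕ) (S Shat Mhat : Matrix (Fin p) (Fin p) ℝ)
    (hSsymm : S.IsSymm) (hSpsd : S.PosSemidef) (hShatsymm : Shat.IsSymm)
    (lam1 theta lam eps : ℝ) (htheta : 0 < theta) (hlam : 0 < lam) (heps : 0 ≤ eps)
    (v : Fin p → ℝ) (hv : ∑ i, v i ^ 2 = 1)
    (hv0 : (Finset.univ.filter (fun j => v j ≠ 0)).card ≤ k)
    (heig : S.mulVec v = lam1 • v)
    (hgap : ∀ w : Fin p → ℝ, (∑ i, w i ^ 2 = 1) → (∑ i, w i * v i = 0) →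
      ∑ i, w i * S.mulVec w i ≤ lam1 - theta)
    (hclose : ∀ i j, |Shat i j - S i j| ≤ lam)
    (hMhat : Mhat.PosSemidef) (hMtr : Mhat.trace = 1)
    (hopt : ∀ M : Matrix (Fin p) (Fin p) ℝ, M.PosSemidef → M.trace = 1 →
      (Shat * M).trace - lam * (∑ i, ∑ j, |M i j|) ≤
        (Shat * Mhat).trace - lam * (∑ i, ∑ j, |Mhat i j|) + eps) :
    Real.sqrt (∑ i, ∑ j, (v i * v j - Mhat i j) ^ 2)
      ≤ 4 * lam * k / theta + Real.sqrt (2 * eps / theta) := by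
  classical
  set T : Finset (Fin p) := Finset.univ.filter (fun j => v j ≠ 0) with hT
  set P : Matrix (Fin p) (Fin p) ℝ := Matrix.of (fun i j => v i * v j) with hPdef
  have hPapp : ∀ i j, P i j = v i * v j := fun i j => rfl
  have hSs : ∀ i j, S j i = S i j := fun i j => congrFun (congrFun hSsymm i) j
  -- quadratic form of P
  have hquadP : ∀ x : Fin p → ℝ, ∑ i, x i * (P *ᵥ x) i = (∑ i, v i * x i) ^ 2 := by
    intro x
    have h1 : ∀ i, (P *ᵥ x) i = v i * ∑ j, v j * x j := by
      intro i
      simp only [Matrix.mulVec, dotProduct, hPapp, Finset.mul_sum]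
      exact Finset.sum_congr rfl fun j _ => by ring
    calc ∑ i, x i * (P *ᵥ x) i = ∑ i, (v i * x i) * (∑ j, v j * x j) := by
          refine Finset.sum_congr rfl fun i _ => ?_; rw [h1 i]; ring
      _ = (∑ i, v i * x i) * (∑ j, v j * x j) := by rw [← Finset.sum_mul]
      _ = (∑ i, v i * x i) ^ 2 := by rw [sq]
  have hPH : P.IsHermitian := by
    ext i j
    simp only [Matrix.conjTranspose_apply, hPapp, star_trivial, mul_comm]
  have hPpsd : P.PosSemidef := by
    refine .of_dotProduct_mulVec_nonneg hPH fun x => ?_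
    have : star x ⬝ᵥ P *ᵥ x = ∑ i, x i * (P *ᵥ x) i := by
      simp [dotProduct]
    rw [this, hquadP]; positivity
  have hPtr : P.trace = 1 := by
    simp only [Matrix.trace, Matrix.diag, hPapp, ← sq]
    exact hv
  -- E = 1 - P is PSD
  have hEpsd : ((1 : Matrix (Fin p) (Fin p) ℝ) - P).PosSemidef := by
    refine .of_dotProduct_mulVec_nonneg (Matrix.isHermitian_one.sub hPH) fun x => ?_
    have h1 : star x ⬝ᵥ ((1 : Matrix (Fin p) (Fin p) ℝ) - P) *ᵥ x
        = (∑ i, x i * x i) - (∑ i, v i * x i) ^ 2 := by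
      rw [Matrix.sub_mulVec, Matrix.one_mulVec]
      have : star x ⬝ᵥ (x - P *ᵥ x) = ∑ i, (x i * x i - x i * (P *ᵥ x) i) := by
        simp [dotProduct, Pi.sub_apply, mul_sub]
      rw [this, Finset.sum_sub_distrib, hquadP]
    rw [h1]
    have hcs := Finset.sum_mul_sq_le_sq_mul_sq Finset.univ v x
    rw [hv, one_mul] at hcs
    have hx2 : ∑ i, x i ^ 2 = ∑ i, x i * x i :=
      Finset.sum_congr rfl fun i _ => pow_two (x i)
    rw [hx2] at hcs
    linarith
  -- the key spectral inequality
  have hkey : ∀ x : Fin p → ℝ, ∑ i, x i * (S *ᵥ x) i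
      ≤ lam1 * (∑ i, v i * x i) ^ 2
        + (lam1 - theta) * ((∑ i, x i * x i) - (∑ i, v i * x i) ^ 2) := by
    intro x
    set c : ℝ := ∑ i, v i * x i with hc
    set y : Fin p → ℝ := fun i => x i - c * v i with hy
    have hxy : ∀ i, x i = c * v i + y i := fun i => by simp [hy]
    have hyv : ∑ i, v i * y i = 0 := by
      have : ∑ i, v i * y i = (∑ i, v i * x i) - c * ∑ i, v i ^ 2 := by
        rw [Finset.mul_sum, ← Finset.sum_sub_distrib]
        exact Finset.sum_congr rfl fun i _ => by simp [hy]; ring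
      rw [this, hv, mul_one, ← hc, sub_self]
    have hSvi : ∀ i, (S *ᵥ v) i = lam1 * v i := fun i => by
      rw [heig]; simp
    have hySv : ∑ i, y i * (S *ᵥ v) i = 0 := by
      have : ∑ i, y i * (S *ᵥ v) i = lam1 * ∑ i, v i * y i := by
        rw [Finset.mul_sum]
        exact Finset.sum_congr rfl fun i _ => by rw [hSvi i]; ring
      rw [this, hyv, mul_zero]
    have hvSy : ∑ i, v i * (S *ᵥ y) i = 0 := by
      have h1 : ∑ i, v i * (S *ᵥ y) i = ∑ j, (S *ᵥ v) j * y j := by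
        simp only [Matrix.mulVec, dotProduct, Finset.mul_sum, Finset.sum_mul]
        rw [Finset.sum_comm]
        exact Finset.sum_congr rfl fun j _ => Finset.sum_congr rfl fun i _ => by
          rw [hSs i j]; ring
      rw [h1]
      have : ∑ j, (S *ᵥ v) j * y j = lam1 * ∑ i, v i * y i := by
        rw [Finset.mul_sum]
        exact Finset.sum_congr rfl fun i _ => by rw [hSvi i]; ring
      rw [this, hyv, mul_zero]
    have hyy : ∑ i, y i * y i = (∑ i, x i * x i) - c ^ 2 := by
      calc ∑ i, y i * y i
          = ∑ i, (x i * x i - 2 * c * (v i * x i) + c ^ 2 * v i ^ 2) :=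
            Finset.sum_congr rfl fun i _ => by simp only [hy]; ring
        _ = (∑ i, x i * x i) - 2 * c * (∑ i, v i * x i) + c ^ 2 * ∑ i, v i ^ 2 := by
            rw [Finset.sum_add_distrib, Finset.sum_sub_distrib, ← Finset.mul_sum,
              ← Finset.mul_sum]
        _ = (∑ i, x i * x i) - c ^ 2 := by rw [hv, ← hc]; ring
    have hyy0 : 0 ≤ ∑ i, y i * y i :=
      Finset.sum_nonneg fun i _ => mul_self_nonneg _
    have hySy : ∑ i, y i * (S *ᵥ y) i ≤ (lam1 - theta) * ((∑ i, x i * x i) - c ^ 2) := by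
      rw [← hyy]
      set n2 : ℝ := ∑ i, y i * y i with hn2
      by_cases hn : n2 = 0
      · have hy0 : ∀ i, y i = 0 := by
          intro i
          have := (Finset.sum_eq_zero_iff_of_nonneg
            (fun i _ => mul_self_nonneg (y i))).mp hn i (Finset.mem_univ i)
          exact mul_self_eq_zero.mp this
        have : ∑ i, y i * (S *ᵥ y) i = 0 :=
          Finset.sum_eq_zero fun i _ => by rw [hy0 i, zero_mul]
        rw [this, hn, mul_zero]
      · have hn2pos : 0 < n2 := lt_of_le_of_ne hyy0 (Ne.symm hn)
        set r : ℝ := Real.sqrt n2 with hr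
        have hrpos : 0 < r := Real.sqrt_pos.mpr hn2pos
        have hr2 : r ^ 2 = n2 := Real.sq_sqrt hn2pos.le
        set w : Fin p → ℝ := fun i => y i / r with hw
        have hw1 : ∑ i, w i ^ 2 = 1 := by
          have : ∑ i, w i ^ 2 = (∑ i, y i * y i) / n2 := by
            rw [Finset.sum_div]
            exact Finset.sum_congr rfl fun i _ => by
              rw [hw]; rw [div_pow, hr2]; ring
          rw [this, ← hn2, div_self hn]
        have hw2 : ∑ i, w i * v i = 0 := by
          have : ∑ i, w i * v i = (∑ i, v i * y i) / r := by
            rw [Finset.sum_div]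
            exact Finset.sum_congr rfl fun i _ => by rw [hw]; ring
          rw [this, hyv, zero_div]
        have hgw := hgap w hw1 hw2
        have hSw : ∀ i, (S *ᵥ w) i = (S *ᵥ y) i / r := by
          intro i
          simp only [Matrix.mulVec, dotProduct, hw, Finset.sum_div]
          exact Finset.sum_congr rfl fun j _ => by ring
        have hwSw : ∑ i, w i * (S *ᵥ w) i = (∑ i, y i * (S *ᵥ y) i) / n2 := by
          rw [Finset.sum_div]
          refine Finset.sum_congr rfl fun i _ => ?_
          rw [hw, hSw i, div_mul_div_comm, hr, Real.mul_self_sqrt hn2pos.le]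
        rw [hwSw] at hgw
        calc ∑ i, y i * (S *ᵥ y) i = ((∑ i, y i * (S *ᵥ y) i) / n2) * n2 := by
              field_simp
          _ ≤ (lam1 - theta) * n2 := mul_le_mul_of_nonneg_right hgw hn2pos.le
    -- expand x = c v + y
    have hSx : ∀ i, (S *ᵥ x) i = c * (S *ᵥ v) i + (S *ᵥ y) i := by
      intro i
      simp only [Matrix.mulVec, dotProduct, Finset.mul_sum, ← Finset.sum_add_distrib]
      exact Finset.sum_congr rfl fun j _ => by rw [hxy j]; ring
    have hexp : ∑ i, x i * (S *ᵥ x) i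
        = c ^ 2 * lam1 + c * (∑ i, v i * (S *ᵥ y) i) + c * (∑ i, y i * (S *ᵥ v) i)
          + ∑ i, y i * (S *ᵥ y) i := by
      have h1 : ∀ i, x i * (S *ᵥ x) i
          = c ^ 2 * (v i * (lam1 * v i)) + c * (v i * (S *ᵥ y) i)
            + c * (y i * (S *ᵥ v) i) + y i * (S *ᵥ y) i := by
        intro i
        rw [hxy i, hSx i, hSvi i]
        ring
      rw [Finset.sum_congr rfl fun i _ => h1 i]
      rw [Finset.sum_add_distrib, Finset.sum_add_distrib, Finset.sum_add_distrib,
        ← Finset.mul_sum, ← Finset.mul_sum, ← Finset.mul_sum]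
      have : ∑ i, v i * (lam1 * v i) = lam1 := by
        have : ∑ i, v i * (lam1 * v i) = lam1 * ∑ i, v i ^ 2 := by
          rw [Finset.mul_sum]; exact Finset.sum_congr rfl fun i _ => by ring
        rw [this, hv, mul_one]
      rw [this]
    rw [hexp, hvSy, hySv]
    nlinarith [hySy]
  -- B - S is PSD
  set Bm : Matrix (Fin p) (Fin p) ℝ :=
    lam1 • P + (lam1 - theta) • ((1 : Matrix (Fin p) (Fin p) ℝ) - P) with hBm
  have hBmH : Bm.IsHermitian := by
    ext i j
    simp only [hBm, Matrix.conjTranspose_apply, star_trivial, Matrix.add_apply,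
      Matrix.smul_apply, Matrix.sub_apply, Matrix.one_apply, hPapp, smul_eq_mul]
    by_cases hij : i = j
    · subst hij; simp
    · simp [hij, Ne.symm hij, mul_comm]
  have hBmS : (Bm - S).PosSemidef := by
    refine .of_dotProduct_mulVec_nonneg (hBmH.sub hSpsd.1) fun x => ?_
    have hBv : ∀ i, ((Bm - S) *ᵥ x) i
        = lam1 * (P *ᵥ x) i + (lam1 - theta) * (x i - (P *ᵥ x) i) - (S *ᵥ x) i := by
      intro i
      rw [hBm]
      rw [Matrix.sub_mulVec, Matrix.add_mulVec, Matrix.smul_mulVec,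
        Matrix.smul_mulVec, Matrix.sub_mulVec, Matrix.one_mulVec]
      simp [smul_eq_mul]
    have h2 : star x ⬝ᵥ (Bm - S) *ᵥ x
        = lam1 * (∑ i, x i * (P *ᵥ x) i)
          + (lam1 - theta) * ((∑ i, x i * x i) - ∑ i, x i * (P *ᵥ x) i)
          - ∑ i, x i * (S *ᵥ x) i := by
      have : star x ⬝ᵥ (Bm - S) *ᵥ x = ∑ i, x i * ((Bm - S) *ᵥ x) i := by
        simp [dotProduct]
      rw [this]
      rw [Finset.sum_congr rfl fun i (_ : i ∈ Finset.univ) => by rw [hBv i]]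
      calc ∑ i, x i * (lam1 * (P *ᵥ x) i + (lam1 - theta) * (x i - (P *ᵥ x) i) - (S *ᵥ x) i)
          = ∑ i, (lam1 * (x i * (P *ᵥ x) i)
              + (lam1 - theta) * (x i * x i - x i * (P *ᵥ x) i) - x i * (S *ᵥ x) i) :=
            Finset.sum_congr rfl fun i _ => by ring
        _ = lam1 * (∑ i, x i * (P *ᵥ x) i)
              + (lam1 - theta) * ((∑ i, x i * x i) - ∑ i, x i * (P *ᵥ x) i)
              - ∑ i, x i * (S *ᵥ x) i := by
            rw [Finset.sum_sub_distrib, Finset.sum_add_distrib, ← Finset.mul_sum,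
              ← Finset.mul_sum, Finset.sum_sub_distrib]
    rw [h2, hquadP]
    have := hkey x
    linarith
  -- trace identities
  set a : ℝ := ∑ i, v i * (Mhat *ᵥ v) i with ha
  have ha0 : 0 ≤ a := by
    have := hMhat.dotProduct_mulVec_nonneg v
    simpa [dotProduct] using this
  have haa : a = ∑ i, ∑ j, v i * (Mhat i j * v j) := by
    rw [ha]
    exact Finset.sum_congr rfl fun i _ => by
      simp [Matrix.mulVec, dotProduct, Finset.mul_sum]
  have hPM : (P * Mhat).trace = a := by
    rw [aux_trace_mul, Finset.sum_comm, haa]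
    exact Finset.sum_congr rfl fun j _ => Finset.sum_congr rfl fun i _ => by
      rw [hPapp]; ring
  have hEM : (((1 : Matrix (Fin p) (Fin p) ℝ) - P) * Mhat).trace = 1 - a := by
    rw [Matrix.sub_mul, Matrix.one_mul, Matrix.trace_sub, hMtr, hPM]
  have ha1 : a ≤ 1 := by
    have := aux_psd_trace_nonneg hEpsd hMhat
    rw [hEM] at this
    linarith
  have hSP : (S * P).trace = lam1 := by
    rw [aux_trace_mul]
    have : ∀ i, ∑ j, S i j * P j i = lam1 * (v i * v i) := by
      intro i
      have h1 : ∑ j, S i j * P j i = (∑ j, S i j * v j) * v i := by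
        rw [Finset.sum_mul]
        exact Finset.sum_congr rfl fun j _ => by rw [hPapp]; ring
      have h2 : ∑ j, S i j * v j = lam1 * v i := by
        have := congrFun heig i
        simpa [Matrix.mulVec, dotProduct] using this
      rw [h1, h2]; ring
    rw [Finset.sum_congr rfl fun i _ => this i, ← Finset.mul_sum]
    have : ∑ i, v i * v i = 1 := by
      rw [← hv]; exact Finset.sum_congr rfl fun i _ => (sq (v i)).symm
    rw [this, mul_one]
  have hSM : (S * Mhat).trace ≤ lam1 * a + (lam1 - theta) * (1 - a) := by
    have h0 := aux_psd_trace_nonneg hBmS hMhat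
    rw [Matrix.sub_mul, Matrix.trace_sub] at h0
    have hBmtr : (Bm * Mhat).trace = lam1 * a + (lam1 - theta) * (1 - a) := by
      rw [hBm, Matrix.add_mul, Matrix.trace_add, Matrix.smul_mul, Matrix.smul_mul,
        Matrix.trace_smul, Matrix.trace_smul, hPM, hEM]
      simp [smul_eq_mul]
    rw [hBmtr] at h0
    linarith
  -- trace of Mhat squared
  have htrM : ∑ i, Mhat i i = 1 := by
    simpa [Matrix.trace, Matrix.diag] using hMtr
  have hM2 : ∑ i, ∑ j, Mhat i j ^ 2 ≤ 1 := by
    calc ∑ i, ∑ j, Mhat i j ^ 2 ≤ ∑ i, ∑ j, Mhat i i * Mhat j j :=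
          Finset.sum_le_sum fun i _ => Finset.sum_le_sum fun j _ => aux_psd_entry hMhat i j
      _ = (∑ i, Mhat i i) * ∑ j, Mhat j j := by rw [Finset.sum_mul_sum]
      _ = 1 := by rw [htrM, mul_one]
  -- D2 bound
  set D2 : ℝ := ∑ i, ∑ j, (v i * v j - Mhat i j) ^ 2 with hD2def
  have hD20 : 0 ≤ D2 :=
    Finset.sum_nonneg fun i _ => Finset.sum_nonneg fun j _ => sq_nonneg _
  have hS1 : ∑ i, ∑ j, (v i * v j) ^ 2 = 1 := by
    have : ∀ i, ∑ j, (v i * v j) ^ 2 = v i ^ 2 * ∑ j, v j ^ 2 := by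
      intro i; rw [Finset.mul_sum]
      exact Finset.sum_congr rfl fun j _ => by ring
    rw [Finset.sum_congr rfl fun i _ => this i, hv]
    simp [hv]
  have hD2eq : D2 = (∑ i, ∑ j, (v i * v j) ^ 2) - 2 * a + ∑ i, ∑ j, Mhat i j ^ 2 := by
    rw [haa]
    have h1 : D2 = ∑ i, ∑ j,
        ((v i * v j) ^ 2 - 2 * (v i * (Mhat i j * v j)) + Mhat i j ^ 2) := by
      rw [hD2def]
      exact Finset.sum_congr rfl fun i _ => Finset.sum_congr rfl fun j _ => by ring
    rw [h1]
    have h2 : ∀ i, ∑ j, ((v i * v j) ^ 2 - 2 * (v i * (Mhat i j * v j)) + Mhat i j ^ 2)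
        = (∑ j, (v i * v j) ^ 2) - 2 * (∑ j, v i * (Mhat i j * v j)) + ∑ j, Mhat i j ^ 2 := by
      intro i
      rw [Finset.sum_add_distrib, Finset.sum_sub_distrib, ← Finset.mul_sum]
    rw [Finset.sum_congr rfl fun i _ => h2 i]
    rw [Finset.sum_add_distrib, Finset.sum_sub_distrib, ← Finset.mul_sum]
  have hD2le : D2 ≤ 2 * (1 - a) := by
    rw [hD2eq, hS1]
    linarith [hM2]
  have hcurv : theta / 2 * D2 ≤ (S * P).trace - (S * Mhat).trace := by
    rw [hSP]
    have hm := mul_le_mul_of_nonneg_left hD2le htheta.le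
    linarith [hSM]
  -- perturbation step
  have h8 : (S * P).trace - (S * Mhat).trace
      ≤ (Shat * P).trace - (Shat * Mhat).trace
        + lam * ∑ i, ∑ j, |v i * v j - Mhat i j| := by
    have e1 : (S * P).trace - (S * Mhat).trace - ((Shat * P).trace - (Shat * Mhat).trace)
        = ∑ i, ∑ j, (S i j - Shat i j) * (P j i - Mhat j i) := by
      rw [aux_trace_mul, aux_trace_mul, aux_trace_mul, aux_trace_mul, aux_sum4]
      exact Finset.sum_congr rfl fun i _ => Finset.sum_congr rfl fun j _ => by ring
    have e2 : ∑ i, ∑ j, (S i j - Shat i j) * (P j i - Mhat j i)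
        ≤ lam * ∑ i, ∑ j, |v i * v j - Mhat i j| := by
      have step : ∀ i j : Fin p, (S i j - Shat i j) * (P j i - Mhat j i)
          ≤ lam * |v j * v i - Mhat j i| := by
        intro i j
        have h1 : |S i j - Shat i j| ≤ lam := by rw [abs_sub_comm]; exact hclose i j
        calc (S i j - Shat i j) * (P j i - Mhat j i)
            ≤ |(S i j - Shat i j) * (P j i - Mhat j i)| := le_abs_self _
          _ = |S i j - Shat i j| * |P j i - Mhat j i| := abs_mul _ _
          _ ≤ lam * |P j i - Mhat j i| := mul_le_mul_of_nonneg_right h1 (abs_nonneg _)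
          _ = lam * |v j * v i - Mhat j i| := by rw [hPapp]
      calc ∑ i, ∑ j, (S i j - Shat i j) * (P j i - Mhat j i)
          ≤ ∑ i, ∑ j, lam * |v j * v i - Mhat j i| :=
            Finset.sum_le_sum fun i _ => Finset.sum_le_sum fun j _ => step i j
        _ = lam * ∑ i, ∑ j, |v j * v i - Mhat j i| := by
            rw [Finset.mul_sum]
            exact Finset.sum_congr rfl fun i _ => (Finset.mul_sum _ _ _).symm
        _ = lam * ∑ i, ∑ j, |v i * v j - Mhat i j| := by rw [Finset.sum_comm]
    linarith [e1, e2]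
  -- eps-optimality applied to P
  have h9 := hopt P hPpsd hPtr
  simp only [hPapp] at h9
  -- support / sparsity step
  have h10 : (∑ i, ∑ j, |v i * v j|) - (∑ i, ∑ j, |Mhat i j|)
      + (∑ i, ∑ j, |v i * v j - Mhat i j|)
      ≤ 2 * ∑ i ∈ T, ∑ j ∈ T, |v i * v j - Mhat i j| := by
    have hterm : ∀ i j : Fin p, |v i * v j| - |Mhat i j| + |v i * v j - Mhat i j|
        ≤ (if i ∈ T then (if j ∈ T then 2 * |v i * v j - Mhat i j| else 0) else 0) := by
      intro i j
      by_cases hi : i ∈ T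
      · by_cases hj : j ∈ T
        · simp only [hi, hj, if_true]
          have := abs_sub_abs_le_abs_sub (v i * v j) (Mhat i j)
          linarith
        · have hj0 : v j = 0 := by
            by_contra h
            exact hj (by rw [hT]; exact Finset.mem_filter.mpr ⟨Finset.mem_univ j, h⟩)
          simp only [hi, if_true, if_neg hj, hj0, mul_zero, abs_zero, zero_sub, abs_neg]
          linarith
      · have hi0 : v i = 0 := by
          by_contra h
          exact hi (by rw [hT]; exact Finset.mem_filter.mpr ⟨Finset.mem_univ i, h⟩)
        simp only [if_neg hi, hi0, zero_mul, abs_zero, zero_sub, abs_neg]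
        linarith
    calc (∑ i, ∑ j, |v i * v j|) - (∑ i, ∑ j, |Mhat i j|)
        + (∑ i, ∑ j, |v i * v j - Mhat i j|)
        = ∑ i, ∑ j, (|v i * v j| - |Mhat i j| + |v i * v j - Mhat i j|) :=
          aux_sum3 _ _ _
      _ ≤ ∑ i, ∑ j, (if i ∈ T then (if j ∈ T then 2 * |v i * v j - Mhat i j| else 0) else 0) :=
          Finset.sum_le_sum fun i _ => Finset.sum_le_sum fun j _ => hterm i j
      _ = ∑ i ∈ T, ∑ j ∈ T, 2 * |v i * v j - Mhat i j| := by
          have hin : ∀ i : Fin p,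
              (∑ j, if i ∈ T then (if j ∈ T then 2 * |v i * v j - Mhat i j| else 0) else 0)
              = (if i ∈ T then (∑ j ∈ T, 2 * |v i * v j - Mhat i j|) else 0) := by
            intro i
            by_cases hi : i ∈ T
            · simp only [hi, if_true]
              rw [Finset.sum_ite_mem, Finset.univ_inter]
            · simp [hi]
          rw [Finset.sum_congr rfl fun i _ => hin i, Finset.sum_ite_mem, Finset.univ_inter]
      _ = 2 * ∑ i ∈ T, ∑ j ∈ T, |v i * v j - Mhat i j| := by
          rw [Finset.mul_sum]
          exact Finset.sum_congr rfl fun i _ => (Finset.mul_sum _ _ _).symm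
  -- Cauchy-Schwarz / cardinality step
  have hDS0 : 0 ≤ ∑ i ∈ T, ∑ j ∈ T, |v i * v j - Mhat i j| :=
    Finset.sum_nonneg fun i _ => Finset.sum_nonneg fun j _ => abs_nonneg _
  have hk0 : (0 : ℝ) ≤ (k : ℝ) := Nat.cast_nonneg k
  have h11 : (∑ i ∈ T, ∑ j ∈ T, |v i * v j - Mhat i j|) ≤ (k : ℝ) * Real.sqrt D2 := by
    have hsq : (∑ i ∈ T, ∑ j ∈ T, |v i * v j - Mhat i j|) ^ 2 ≤ ((k : ℝ) * (k : ℝ)) * D2 := by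
      rw [← Finset.sum_product']
      have hcs := sq_sum_le_card_mul_sum_sq (s := T ×ˢ T)
        (f := fun x : Fin p × Fin p => |v x.1 * v x.2 - Mhat x.1 x.2|)
      have hcard : ((T ×ˢ T).card : ℝ) ≤ (k : ℝ) * (k : ℝ) := by
        rw [Finset.card_product]
        push_cast
        exact mul_le_mul (Nat.cast_le.mpr hv0) (Nat.cast_le.mpr hv0)
          (Nat.cast_nonneg _) hk0
      have hsub : ∑ x ∈ T ×ˢ T, |v x.1 * v x.2 - Mhat x.1 x.2| ^ 2 ≤ D2 := by
        have h1 : ∑ x ∈ T ×ˢ T, |v x.1 * v x.2 - Mhat x.1 x.2| ^ 2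
            ≤ ∑ x ∈ (Finset.univ ×ˢ Finset.univ : Finset (Fin p × Fin p)),
              |v x.1 * v x.2 - Mhat x.1 x.2| ^ 2 :=
          Finset.sum_le_sum_of_subset_of_nonneg
            (Finset.product_subset_product (Finset.subset_univ T) (Finset.subset_univ T))
            (fun _ _ _ => sq_nonneg _)
        have h2 : ∑ x ∈ (Finset.univ ×ˢ Finset.univ : Finset (Fin p × Fin p)),
            |v x.1 * v x.2 - Mhat x.1 x.2| ^ 2 = D2 := by
          rw [hD2def, ← Finset.sum_product']
          exact Finset.sum_congr rfl fun x _ => sq_abs _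
        rw [h2] at h1
        exact h1
      calc (∑ x ∈ T ×ˢ T, |v x.1 * v x.2 - Mhat x.1 x.2|) ^ 2
          ≤ ((T ×ˢ T).card : ℝ) * ∑ x ∈ T ×ˢ T, |v x.1 * v x.2 - Mhat x.1 x.2| ^ 2 := hcs
        _ ≤ ((k : ℝ) * (k : ℝ)) * D2 := by
            apply mul_le_mul hcard hsub (Finset.sum_nonneg fun _ _ => sq_nonneg _)
            positivity
    have hrt : Real.sqrt (((k : ℝ) * (k : ℝ)) * D2) = (k : ℝ) * Real.sqrt D2 := by
      rw [Real.sqrt_mul (by positivity), Real.sqrt_mul_self hk0]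
    calc (∑ i ∈ T, ∑ j ∈ T, |v i * v j - Mhat i j|)
        = Real.sqrt ((∑ i ∈ T, ∑ j ∈ T, |v i * v j - Mhat i j|) ^ 2) :=
          (Real.sqrt_sq hDS0).symm
      _ ≤ Real.sqrt (((k : ℝ) * (k : ℝ)) * D2) := Real.sqrt_le_sqrt hsq
      _ = (k : ℝ) * Real.sqrt D2 := hrt
  -- assemble
  have hchain : theta / 2 * D2 ≤ 2 * lam * ((k : ℝ) * Real.sqrt D2) + eps := by
    have m1 := mul_le_mul_of_nonneg_left h10 hlam.le
    have m2 := mul_le_mul_of_nonneg_left h11 (by linarith : (0:ℝ) ≤ 2 * lam)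
    linarith [hcurv, h8, h9, m1, m2]
  have hA0 : (0 : ℝ) ≤ 4 * lam * (k : ℝ) / theta :=
    div_nonneg (by nlinarith [hlam.le, hk0]) htheta.le
  have hb0 : (0 : ℝ) ≤ 2 * eps / theta := div_nonneg (by linarith) htheta.le
  have := aux_final (Real.sqrt D2) (4 * lam * (k : ℝ) / theta) (2 * eps / theta) hA0 hb0
    (by
      rw [Real.sq_sqrt hD20, div_mul_eq_mul_div, ← add_div, le_div_iff₀ htheta]
      nlinarith [hchain])
  exact this
end

section
/- Under the hypotheses of the previous SDP bound, let v̂ be a unit leading eigenvector of M̂. Then ‖v̂v̂ᵀ - M̂‖₂ ≤ ‖vvᵀ - M̂‖₂, and consequently L(v̂, v) := (1 - (v̂ᵀv)²)^{1/2} ≤ √2·‖vvᵀ - M̂‖₂ ≤ 4√2·λk/θ + 2√(ε/θ). -/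
open Matrix Finset
open scoped Classical

lemma stmt11_quad_root {x a b : ℝ} (hx : 0 ≤ x) (ha : 0 ≤ a) (hb : 0 ≤ b)
    (h : x ^ 2 ≤ a * x + b ^ 2) : x ≤ a + b := by
  by_contra hc
  push_neg at hc
  nlinarith

lemma stmt11_l2_triangle {n : Type*} [Fintype n] (a b : n → ℝ) :
    Real.sqrt (∑ i, (a i + b i) ^ 2)
      ≤ Real.sqrt (∑ i, (a i) ^ 2) + Real.sqrt (∑ i, (b i) ^ 2) := by
  set A := Real.sqrt (∑ i, (a i) ^ 2) with hA
  set B := Real.sqrt (∑ i, (b i) ^ 2) with hB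
  have hAnn : 0 ≤ A := Real.sqrt_nonneg _
  have hBnn : 0 ≤ B := Real.sqrt_nonneg _
  have hA2 : A ^ 2 = ∑ i, (a i) ^ 2 := Real.sq_sqrt (by positivity)
  have hB2 : B ^ 2 = ∑ i, (b i) ^ 2 := Real.sq_sqrt (by positivity)
  have hab : ∑ i, a i * b i ≤ A * B := by
    rcases le_or_gt (∑ i, a i * b i) 0 with h | h
    · exact h.trans (by positivity)
    · have h2 := Finset.sum_mul_sq_le_sq_mul_sq univ a b
      rw [← hA2, ← hB2] at h2
      nlinarith [h2, mul_nonneg hAnn hBnn]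
  have h1 : ∑ i, (a i + b i) ^ 2 ≤ (A + B) ^ 2 := by
    have : ∑ i, (a i + b i) ^ 2 = (∑ i, (a i) ^ 2) + 2 * (∑ i, a i * b i) + ∑ i, (b i) ^ 2 := by
      rw [Finset.mul_sum, ← Finset.sum_add_distrib, ← Finset.sum_add_distrib]
      exact Finset.sum_congr rfl fun i _ => by ring
    nlinarith
  calc Real.sqrt (∑ i, (a i + b i) ^ 2) ≤ Real.sqrt ((A + B) ^ 2) := Real.sqrt_le_sqrt h1
    _ = A + B := Real.sqrt_sq (by positivity)

lemma stmt11_trace_mul_nonneg {n : Type*} [Fintype n] [DecidableEq n]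
    {A B : Matrix n n ℝ} (hA : A.PosSemidef) (hB : B.PosSemidef) :
    0 ≤ (A * B).trace := by
  obtain ⟨m, u, rfl⟩ := Matrix.posSemidef_iff_eq_sum_vecMulVec.mp hA
  rw [Finset.sum_mul, Matrix.trace_sum]
  refine Finset.sum_nonneg fun i _ => ?_
  rw [vecMulVec_mul, trace_vecMulVec]
  have h := hB.dotProduct_mulVec_nonneg (u i)
  rwa [dotProduct_mulVec, dotProduct_comm] at h

lemma stmt11_psd_entry {n : Type*} [Fintype n] [DecidableEq n]
    {M : Matrix n n ℝ} (hM : M.PosSemidef) (i j : n) :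
    M i j ^ 2 ≤ M i i * M j j := by
  have hsym : M j i = M i j := by
    have := congrFun (congrFun hM.1 i) j
    simpa [Matrix.conjTranspose_apply] using this
  have hq : ∀ t : ℝ, 0 ≤ M j j * (t * t) + (2 * M i j) * t + M i i := by
    intro t
    have h := hM.dotProduct_mulVec_nonneg (fun a => (if a = i then (1:ℝ) else 0) + t * (if a = j then 1 else 0))
    rw [star_trivial] at h
    have expand : (fun a => (if a = i then (1:ℝ) else 0) + t * (if a = j then 1 else 0)) ⬝ᵥ
        M *ᵥ (fun a => (if a = i then (1:ℝ) else 0) + t * (if a = j then 1 else 0))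
        = M i i + t * M i j + t * M j i + t * t * M j j := by
      simp only [dotProduct, Matrix.mulVec, mul_add, add_mul, mul_ite, ite_mul,
        mul_zero, zero_mul, mul_one, one_mul, Finset.sum_add_distrib,
        Finset.sum_ite_eq, Finset.sum_ite_eq', Finset.mem_univ, if_true, Finset.mul_sum]
      ring
    rw [expand, hsym] at h
    linarith
  have hd := discrim_le_zero hq
  rw [discrim] at hd
  nlinarith

set_option maxHeartbeats 1600000 in
/-- Under the SDP hypotheses, a unit leading eigenvector `v̂` of `M̂` satisfies
`‖v̂v̂ᵀ - M̂‖₂ ≤ ‖vvᵀ - M̂‖₂` and `L(v̂,v) ≤ √2 ‖vvᵀ - M̂‖₂ ≤ 4√2 λk/θ + 2√(ε/θ)`. -/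
theorem stmt_11 (p k : ℕ) (S Shat Mhat : Matrix (Fin p) (Fin p) ℝ)
    (hSsymm : S.IsSymm) (hSpsd : S.PosSemidef) (hShatsymm : Shat.IsSymm)
    (lam1 theta lam eps : ℝ) (htheta : 0 < theta) (hlam : 0 < lam) (heps : 0 ≤ eps)
    (v : Fin p → ℝ) (hv : ∑ i, v i ^ 2 = 1)
    (hv0 : (Finset.univ.filter (fun j => v j ≠ 0)).card ≤ k)
    (heig : S.mulVec v = lam1 • v)
    (hgap : ∀ w : Fin p → ℝ, (∑ i, w i ^ 2 = 1) → (∑ i, w i * v i = 0) →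
      ∑ i, w i * S.mulVec w i ≤ lam1 - theta)
    (hclose : ∀ i j, |Shat i j - S i j| ≤ lam)
    (hMhat : Mhat.PosSemidef) (hMtr : Mhat.trace = 1)
    (hopt : ∀ M : Matrix (Fin p) (Fin p) ℝ, M.PosSemidef → M.trace = 1 →
      (Shat * M).trace - lam * (∑ i, ∑ j, |M i j|) ≤
        (Shat * Mhat).trace - lam * (∑ i, ∑ j, |Mhat i j|) + eps)
    (vhat : Fin p → ℝ) (hvhat : ∑ i, vhat i ^ 2 = 1)
    (hlead : ∀ u : Fin p → ℝ, (∑ i, u i ^ 2 = 1) →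
      ∑ i, u i * Mhat.mulVec u i ≤ ∑ i, vhat i * Mhat.mulVec vhat i) :
    Real.sqrt (∑ i, ∑ j, (vhat i * vhat j - Mhat i j) ^ 2)
      ≤ Real.sqrt (∑ i, ∑ j, (v i * v j - Mhat i j) ^ 2) ∧
    Real.sqrt (1 - (∑ i, vhat i * v i) ^ 2)
      ≤ Real.sqrt 2 * Real.sqrt (∑ i, ∑ j, (v i * v j - Mhat i j) ^ 2) ∧
    Real.sqrt (1 - (∑ i, vhat i * v i) ^ 2)
      ≤ 4 * Real.sqrt 2 * lam * k / theta + 2 * Real.sqrt (eps / theta) := by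
  classical
  have hxx : ∀ x : Fin p → ℝ, x ⬝ᵥ x = ∑ i, x i ^ 2 := fun x =>
    Finset.sum_congr rfl fun i _ => (pow_two (x i)).symm
  have hvv : v ⬝ᵥ v = 1 := by rw [hxx]; exact hv
  have hbil : ∀ (M : Matrix (Fin p) (Fin p) ℝ) (x : Fin p → ℝ),
      ∑ i, ∑ j, M i j * (x i * x j) = ∑ i, x i * M.mulVec x i := by
    intro M x
    simp only [Matrix.mulVec, dotProduct, Finset.mul_sum]
    exact Finset.sum_congr rfl fun i _ => Finset.sum_congr rfl fun j _ => by ring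
  have expand : ∀ x : Fin p → ℝ, (∑ i, x i ^ 2 = 1) → ∀ M : Matrix (Fin p) (Fin p) ℝ,
      ∑ i, ∑ j, (x i * x j - M i j) ^ 2
        = 1 - 2 * (∑ i, x i * M.mulVec x i) + ∑ i, ∑ j, M i j ^ 2 := by
    intro x hx M
    have h1 : ∑ i, ∑ j, (x i) ^ 2 * (x j) ^ 2 = 1 := by
      simp_rw [← Finset.mul_sum, hx, mul_one]
      exact hx
    have h2 : ∑ i, ∑ j, 2 * (M i j * (x i * x j))
        = 2 * ∑ i, ∑ j, M i j * (x i * x j) := by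
      rw [Finset.mul_sum]
      exact Finset.sum_congr rfl fun i _ => by rw [Finset.mul_sum]
    calc ∑ i, ∑ j, (x i * x j - M i j) ^ 2
        = ∑ i, ∑ j, ((x i) ^ 2 * (x j) ^ 2 - 2 * (M i j * (x i * x j)) + M i j ^ 2) :=
          Finset.sum_congr rfl fun i _ => Finset.sum_congr rfl fun j _ => by ring
      _ = (∑ i, ∑ j, (x i) ^ 2 * (x j) ^ 2) - (∑ i, ∑ j, 2 * (M i j * (x i * x j)))
            + ∑ i, ∑ j, M i j ^ 2 := by
          simp only [Finset.sum_add_distrib, Finset.sum_sub_distrib]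
      _ = 1 - 2 * (∑ i, x i * M.mulVec x i) + ∑ i, ∑ j, M i j ^ 2 := by
          rw [h1, h2, hbil]
  -- Part 1
  have e1 := expand vhat hvhat Mhat
  have e2 := expand v hv Mhat
  have hlead' := hlead v hv
  have part1 : Real.sqrt (∑ i, ∑ j, (vhat i * vhat j - Mhat i j) ^ 2)
      ≤ Real.sqrt (∑ i, ∑ j, (v i * v j - Mhat i j) ^ 2) := by
    apply Real.sqrt_le_sqrt
    rw [e1, e2]
    linarith
  -- symmetry facts
  have hMsym : ∀ i j, Mhat j i = Mhat i j := fun i j => by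
    simpa [Matrix.conjTranspose_apply] using congrFun (congrFun hMhat.1 i) j
  have hSsym' : ∀ i j, S j i = S i j := fun i j => by
    simpa [Matrix.transpose_apply] using congrFun (congrFun hSsymm i) j
  have htrace_sum : ∑ i, Mhat i i = 1 := by
    simpa [Matrix.trace, Matrix.diag] using hMtr
  have hfrob : ∑ i, ∑ j, Mhat i j ^ 2 ≤ 1 := by
    calc ∑ i, ∑ j, Mhat i j ^ 2 ≤ ∑ i, ∑ j, Mhat i i * Mhat j j :=
          Finset.sum_le_sum fun i _ => Finset.sum_le_sum fun j _ => stmt11_psd_entry hMhat i j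
      _ = (∑ i, Mhat i i) * (∑ j, Mhat j j) := (Finset.sum_mul_sum _ _ _ _).symm
      _ = 1 := by rw [htrace_sum, mul_one]
  -- homogeneous spectral gap inequality
  have hvSy : ∀ y : Fin p → ℝ, v ⬝ᵥ S *ᵥ y = lam1 * (v ⬝ᵥ y) := by
    intro y
    rw [Matrix.dotProduct_mulVec, ← Matrix.mulVec_transpose, hSsymm, heig,
      smul_dotProduct, smul_eq_mul]
  have hgap' : ∀ x : Fin p → ℝ,
      x ⬝ᵥ S *ᵥ x ≤ lam1 * (x ⬝ᵥ x) - theta * ((x ⬝ᵥ x) - (x ⬝ᵥ v) ^ 2) := by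
    intro x
    set cx := x ⬝ᵥ v with hcx
    set z : Fin p → ℝ := x - cx • v with hz
    have hzv : z ⬝ᵥ v = 0 := by
      rw [hz, sub_dotProduct, smul_dotProduct, hvv, smul_eq_mul, mul_one,
        ← hcx, sub_self]
    have hxz : x = cx • v + z := by rw [hz]; abel
    have hzz : z ⬝ᵥ z = x ⬝ᵥ x - cx ^ 2 := by
      rw [hz]
      simp only [sub_dotProduct, dotProduct_sub, smul_dotProduct,
        dotProduct_smul, smul_eq_mul, hvv, mul_one]
      rw [dotProduct_comm v x, ← hcx]
      ring
    have hSxx : x ⬝ᵥ S *ᵥ x = cx ^ 2 * lam1 + z ⬝ᵥ S *ᵥ z := by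
      conv_lhs => rw [hxz]
      rw [Matrix.mulVec_add, Matrix.mulVec_smul, heig]
      have h1 : v ⬝ᵥ S *ᵥ z = 0 := by
        rw [hvSy z, dotProduct_comm v z, hzv, mul_zero]
      simp only [add_dotProduct, dotProduct_add, smul_dotProduct,
        dotProduct_smul, smul_eq_mul, h1, hzv, hvv]
      ring
    have hgapz : z ⬝ᵥ S *ᵥ z ≤ (lam1 - theta) * (z ⬝ᵥ z) := by
      have hzznn : (0:ℝ) ≤ z ⬝ᵥ z := by rw [hxx]; positivity
      rcases eq_or_lt_of_le hzznn with h0 | h0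
      · have hsum : ∑ i, z i ^ 2 = 0 := by rw [← hxx]; exact h0.symm
        have hz0 : z = 0 := by
          funext i
          have := (Finset.sum_eq_zero_iff_of_nonneg
            (fun i _ => sq_nonneg (z i))).mp hsum i (Finset.mem_univ i)
          exact pow_eq_zero_iff two_ne_zero |>.mp this
        rw [hz0]
        simp
      · set t := z ⬝ᵥ z with ht
        have htnn : 0 ≤ t := le_of_lt h0
        have hst : Real.sqrt t * Real.sqrt t = t := Real.mul_self_sqrt htnn
        have hinv : (Real.sqrt t)⁻¹ * (Real.sqrt t)⁻¹ = t⁻¹ := by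
          rw [← mul_inv, hst]
        set w : Fin p → ℝ := (Real.sqrt t)⁻¹ • z with hw
        have hww' : w ⬝ᵥ w = t⁻¹ * t := by
          rw [hw, smul_dotProduct, dotProduct_smul, smul_eq_mul, smul_eq_mul,
            ← mul_assoc, hinv, ← ht]
        have hww : ∑ i, w i ^ 2 = 1 := by
          rw [← hxx, hww', inv_mul_cancel₀ (ne_of_gt h0)]
        have hwv : ∑ i, w i * v i = 0 := by
          show w ⬝ᵥ v = 0
          rw [hw, smul_dotProduct, hzv, smul_eq_mul, mul_zero]
        have hwSw : w ⬝ᵥ S *ᵥ w = t⁻¹ * (z ⬝ᵥ S *ᵥ z) := by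
          rw [hw, Matrix.mulVec_smul, smul_dotProduct, dotProduct_smul,
            smul_eq_mul, smul_eq_mul, ← mul_assoc, hinv]
        have hgw : w ⬝ᵥ S *ᵥ w ≤ lam1 - theta := hgap w hww hwv
        rw [hwSw] at hgw
        calc z ⬝ᵥ S *ᵥ z = t * (t⁻¹ * (z ⬝ᵥ S *ᵥ z)) := by
              rw [← mul_assoc, mul_inv_cancel₀ (ne_of_gt h0), one_mul]
          _ ≤ t * (lam1 - theta) := mul_le_mul_of_nonneg_left hgw htnn
          _ = (lam1 - theta) * t := mul_comm _ _
    calc x ⬝ᵥ S *ᵥ x = cx ^ 2 * lam1 + z ⬝ᵥ S *ᵥ z := hSxx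
      _ ≤ cx ^ 2 * lam1 + (lam1 - theta) * (z ⬝ᵥ z) := by linarith
      _ = lam1 * (x ⬝ᵥ x) - theta * ((x ⬝ᵥ x) - cx ^ 2) := by rw [hzz]; ring
  -- the curvature matrix
  have hvvmul : ∀ x : Fin p → ℝ, vecMulVec v v *ᵥ x = (v ⬝ᵥ x) • v := by
    intro x; funext i
    simp only [Matrix.mulVec, dotProduct, vecMulVec_apply, Pi.smul_apply, smul_eq_mul]
    rw [Finset.sum_mul]
    exact Finset.sum_congr rfl fun j _ => by ring
  set Amat : Matrix (Fin p) (Fin p) ℝ :=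
    lam1 • (1 : Matrix (Fin p) (Fin p) ℝ) - S
      - theta • ((1 : Matrix (Fin p) (Fin p) ℝ) - vecMulVec v v) with hAmat
  have hApsd : Amat.PosSemidef := by
    refine Matrix.PosSemidef.of_dotProduct_mulVec_nonneg ?_ ?_
    · show Amatᴴ = Amat
      ext i j
      simp only [hAmat, Matrix.conjTranspose_apply, star_trivial, Matrix.sub_apply,
        Matrix.smul_apply, Matrix.one_apply, vecMulVec_apply, smul_eq_mul]
      rcases eq_or_ne i j with rfl | hne
      · ring
      · simp only [hne, Ne.symm hne, if_false]
        rw [hSsym' i j]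
        ring
    · intro x
      have hsx : star x = x := by simp
      rw [hsx]
      have hAx : Amat *ᵥ x = lam1 • x - S *ᵥ x - theta • (x - (v ⬝ᵥ x) • v) := by
        rw [hAmat, Matrix.sub_mulVec, Matrix.sub_mulVec, Matrix.smul_mulVec,
          Matrix.smul_mulVec, Matrix.one_mulVec, Matrix.sub_mulVec,
          Matrix.one_mulVec, hvvmul]
      rw [hAx]
      simp only [dotProduct_sub, dotProduct_smul, smul_eq_mul]
      rw [dotProduct_comm v x]
      nlinarith [hgap' x]
  have htrA := stmt11_trace_mul_nonneg hApsd hMhat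
  have htrXY : ∀ X Y : Matrix (Fin p) (Fin p) ℝ,
      (X * Y).trace = ∑ i, ∑ j, X i j * Y j i := by
    intro X Y; simp [Matrix.trace, Matrix.diag, Matrix.mul_apply]
  have hdel : ∑ i, ∑ j, (if i = j then (1:ℝ) else 0) * Mhat j i = 1 := by
    have : ∀ i, ∑ j, (if i = j then (1:ℝ) else 0) * Mhat j i = Mhat i i := by
      intro i
      rw [Finset.sum_congr rfl (fun j (_ : j ∈ Finset.univ) => by
        rw [ite_mul, one_mul, zero_mul])]
      rw [Finset.sum_ite_eq]
      simp
    simp_rw [this]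
    exact htrace_sum
  have hvvM : ∑ i, ∑ j, (v i * v j) * Mhat j i = ∑ i, v i * Mhat.mulVec v i := by
    rw [Finset.sum_comm, ← hbil Mhat v]
    exact Finset.sum_congr rfl fun j _ => Finset.sum_congr rfl fun i _ => by ring
  have hSMsym : ∑ i, ∑ j, S i j * Mhat j i = ∑ i, ∑ j, S i j * Mhat i j :=
    Finset.sum_congr rfl fun i _ => Finset.sum_congr rfl fun j _ => by rw [hMsym]
  have htrexp : (Amat * Mhat).trace
      = lam1 - (∑ i, ∑ j, S i j * Mhat i j)
        - theta * (1 - ∑ i, v i * Mhat.mulVec v i) := by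
    rw [htrXY]
    have hentry : ∀ i j, Amat i j * Mhat j i
        = lam1 * ((if i = j then (1:ℝ) else 0) * Mhat j i) - S i j * Mhat j i
          - theta * ((if i = j then (1:ℝ) else 0) * Mhat j i - (v i * v j) * Mhat j i) := by
      intro i j
      simp only [hAmat, Matrix.sub_apply, Matrix.smul_apply, Matrix.one_apply,
        vecMulVec_apply, smul_eq_mul]
      ring
    simp_rw [hentry]
    simp only [Finset.sum_sub_distrib, ← Finset.mul_sum]
    rw [hdel, hvvM, hSMsym, mul_one]
  have hcurv : theta * (1 - ∑ i, v i * Mhat.mulVec v i)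
      ≤ lam1 - ∑ i, ∑ j, S i j * Mhat i j := by
    rw [htrexp] at htrA
    linarith
  -- T0 and T1
  have hvSv : ∑ i, ∑ j, S i j * (v i * v j) = lam1 := by
    rw [hbil S v]
    show v ⬝ᵥ S *ᵥ v = lam1
    rw [heig, dotProduct_smul, smul_eq_mul, hvv, mul_one]
  have hT0 : ∑ i, ∑ j, S i j * (v i * v j - Mhat i j)
      = lam1 - ∑ i, ∑ j, S i j * Mhat i j := by
    have : ∀ i j, S i j * (v i * v j - Mhat i j)
        = S i j * (v i * v j) - S i j * Mhat i j := fun i j => by ring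
    simp_rw [this]
    simp only [Finset.sum_sub_distrib]
    rw [hvSv]
  have hT0T1 : ∑ i, ∑ j, S i j * (v i * v j - Mhat i j)
      ≤ (∑ i, ∑ j, Shat i j * (v i * v j - Mhat i j))
        + lam * ∑ i, ∑ j, |v i * v j - Mhat i j| := by
    have hpt : ∀ i j, S i j * (v i * v j - Mhat i j)
        ≤ Shat i j * (v i * v j - Mhat i j) + lam * |v i * v j - Mhat i j| := by
      intro i j
      have h1 : (S i j - Shat i j) * (v i * v j - Mhat i j)
          ≤ |S i j - Shat i j| * |v i * v j - Mhat i j| := by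
        calc (S i j - Shat i j) * (v i * v j - Mhat i j)
            ≤ |(S i j - Shat i j) * (v i * v j - Mhat i j)| := le_abs_self _
          _ = |S i j - Shat i j| * |v i * v j - Mhat i j| := abs_mul _ _
      have h2 : |S i j - Shat i j| ≤ lam := by rw [abs_sub_comm]; exact hclose i j
      nlinarith [abs_nonneg (v i * v j - Mhat i j)]
    calc ∑ i, ∑ j, S i j * (v i * v j - Mhat i j)
        ≤ ∑ i, ∑ j, (Shat i j * (v i * v j - Mhat i j) + lam * |v i * v j - Mhat i j|) :=
          Finset.sum_le_sum fun i _ => Finset.sum_le_sum fun j _ => hpt i j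
      _ = (∑ i, ∑ j, Shat i j * (v i * v j - Mhat i j))
            + lam * ∑ i, ∑ j, |v i * v j - Mhat i j| := by
          simp only [Finset.sum_add_distrib, ← Finset.mul_sum]
  -- applying optimality at v vᵀ
  have hvvpsd : (vecMulVec v v).PosSemidef := by
    refine Matrix.PosSemidef.of_dotProduct_mulVec_nonneg ?_ ?_
    · show (vecMulVec v v)ᴴ = vecMulVec v v
      ext i j
      simp only [Matrix.conjTranspose_apply, star_trivial, vecMulVec_apply]
      ring
    · intro x
      have hsx : star x = x := by simp
      rw [hsx, hvvmul, dotProduct_smul, smul_eq_mul, dotProduct_comm x v]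
      exact mul_self_nonneg _
  have hvvtr : (vecMulVec v v).trace = 1 := by
    simp only [Matrix.trace, Matrix.diag, vecMulVec_apply]
    have : ∑ x : Fin p, v x * v x = ∑ x, v x ^ 2 :=
      Finset.sum_congr rfl fun i _ => (pow_two (v i)).symm
    rw [this]
    exact hv
  have hoptv := hopt (vecMulVec v v) hvvpsd hvvtr
  have htrShatvv : (Shat * vecMulVec v v).trace = ∑ i, ∑ j, Shat i j * (v i * v j) := by
    rw [htrXY]
    exact Finset.sum_congr rfl fun i _ => Finset.sum_congr rfl fun j _ => by
      rw [vecMulVec_apply]; ring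
  have habsvv : ∑ i, ∑ j, |vecMulVec v v i j| = ∑ i, ∑ j, |v i * v j| := by
    simp [vecMulVec_apply]
  have htrShatM : (Shat * Mhat).trace = ∑ i, ∑ j, Shat i j * Mhat i j := by
    rw [htrXY]
    exact Finset.sum_congr rfl fun i _ => Finset.sum_congr rfl fun j _ => by rw [hMsym]
  have hT1split : ∑ i, ∑ j, Shat i j * (v i * v j - Mhat i j)
      = (∑ i, ∑ j, Shat i j * (v i * v j)) - ∑ i, ∑ j, Shat i j * Mhat i j := by
    have : ∀ i j, Shat i j * (v i * v j - Mhat i j)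
        = Shat i j * (v i * v j) - Shat i j * Mhat i j := fun i j => by ring
    simp_rw [this]
    simp only [Finset.sum_sub_distrib]
  have hT1 : ∑ i, ∑ j, Shat i j * (v i * v j - Mhat i j)
      ≤ lam * (∑ i, ∑ j, |v i * v j|) - lam * (∑ i, ∑ j, |Mhat i j|) + eps := by
    rw [htrShatvv, habsvv, htrShatM] at hoptv
    rw [hT1split]
    linarith
  -- the ℓ¹ bound on the support
  set sE : Finset (Fin p) := Finset.univ.filter (fun j => v j ≠ 0) with hsE
  set SE : ℝ := ∑ i ∈ sE, ∑ j ∈ sE, |v i * v j - Mhat i j| with hSEdef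
  have h7 : (∑ i, ∑ j, |v i * v j|) - (∑ i, ∑ j, |Mhat i j|)
      + (∑ i, ∑ j, |v i * v j - Mhat i j|) ≤ 2 * SE := by
    have hptfull : ∀ i j, |v i * v j| - |Mhat i j| + |v i * v j - Mhat i j|
        ≤ (if v i ≠ 0 ∧ v j ≠ 0 then 2 * |v i * v j - Mhat i j| else 0) := by
      intro i j
      by_cases h : v i ≠ 0 ∧ v j ≠ 0
      · rw [if_pos h]
        have := abs_sub_abs_le_abs_sub (v i * v j) (Mhat i j)
        linarith
      · rw [if_neg h]
        have hvz : v i * v j = 0 := by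
          push_neg at h
          rcases eq_or_ne (v i) 0 with h1 | h1
          · rw [h1, zero_mul]
          · rw [h h1, mul_zero]
        rw [hvz]
        simp
    have hsum : ∑ i, ∑ j, (|v i * v j| - |Mhat i j| + |v i * v j - Mhat i j|)
        ≤ ∑ i, ∑ j, (if v i ≠ 0 ∧ v j ≠ 0 then 2 * |v i * v j - Mhat i j| else 0) :=
      Finset.sum_le_sum fun i _ => Finset.sum_le_sum fun j _ => hptfull i j
    have hlhs : ∑ i, ∑ j, (|v i * v j| - |Mhat i j| + |v i * v j - Mhat i j|)
        = (∑ i, ∑ j, |v i * v j|) - (∑ i, ∑ j, |Mhat i j|)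
          + ∑ i, ∑ j, |v i * v j - Mhat i j| := by
      simp only [Finset.sum_add_distrib, Finset.sum_sub_distrib]
    have hinner : ∀ i, ∑ j, (if v i ≠ 0 ∧ v j ≠ 0 then 2 * |v i * v j - Mhat i j| else 0)
        = if v i ≠ 0 then ∑ j ∈ sE, 2 * |v i * v j - Mhat i j| else 0 := by
      intro i
      by_cases hi : v i ≠ 0
      · rw [if_pos hi, hsE, Finset.sum_filter]
        exact Finset.sum_congr rfl fun j _ => by
          by_cases hj : v j ≠ 0 <;> simp [hi, hj]
      · rw [if_neg hi]
        exact Finset.sum_eq_zero fun j _ => by simp [hi]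
    have hre : ∑ i, ∑ j, (if v i ≠ 0 ∧ v j ≠ 0 then 2 * |v i * v j - Mhat i j| else 0)
        = 2 * SE := by
      simp_rw [hinner]
      rw [← Finset.sum_filter, ← hsE, hSEdef, Finset.mul_sum]
      exact Finset.sum_congr rfl fun i _ => by rw [Finset.mul_sum]
    rw [hlhs, hre] at hsum
    exact hsum
  -- Cauchy–Schwarz on the support block
  have hSEnn : 0 ≤ SE := by
    rw [hSEdef]
    exact Finset.sum_nonneg fun i _ => Finset.sum_nonneg fun j _ => abs_nonneg _
  set Dv : ℝ := Real.sqrt (∑ i, ∑ j, (v i * v j - Mhat i j) ^ 2) with hDv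
  have hDvnn : 0 ≤ Dv := Real.sqrt_nonneg _
  have hDv2 : Dv ^ 2 = ∑ i, ∑ j, (v i * v j - Mhat i j) ^ 2 :=
    Real.sq_sqrt (by positivity)
  have hSE : SE ≤ (k : ℝ) * Dv := by
    have hprod : SE = ∑ q ∈ sE ×ˢ sE, |v q.1 * v q.2 - Mhat q.1 q.2| := by
      rw [hSEdef, Finset.sum_product]
    have hcs := sq_sum_le_card_mul_sum_sq
      (s := sE ×ˢ sE) (f := fun q => |v q.1 * v q.2 - Mhat q.1 q.2|)
    have hcard : (((sE ×ˢ sE).card : ℕ) : ℝ) ≤ (k : ℝ) * k := by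
      rw [Finset.card_product]
      push_cast
      exact mul_le_mul (Nat.cast_le.mpr hv0) (Nat.cast_le.mpr hv0)
        (Nat.cast_nonneg _) (Nat.cast_nonneg _)
    have hsq : ∑ q ∈ sE ×ˢ sE, |v q.1 * v q.2 - Mhat q.1 q.2| ^ 2
        ≤ ∑ i, ∑ j, (v i * v j - Mhat i j) ^ 2 := by
      calc ∑ q ∈ sE ×ˢ sE, |v q.1 * v q.2 - Mhat q.1 q.2| ^ 2
          = ∑ q ∈ sE ×ˢ sE, (v q.1 * v q.2 - Mhat q.1 q.2) ^ 2 := by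
            exact Finset.sum_congr rfl fun q _ => sq_abs _
        _ ≤ ∑ q : Fin p × Fin p, (v q.1 * v q.2 - Mhat q.1 q.2) ^ 2 :=
            Finset.sum_le_sum_of_subset_of_nonneg (Finset.subset_univ _)
              (fun q _ _ => sq_nonneg _)
        _ = ∑ i, ∑ j, (v i * v j - Mhat i j) ^ 2 := Fintype.sum_prod_type _
    have hsqnn : 0 ≤ ∑ q ∈ sE ×ˢ sE, |v q.1 * v q.2 - Mhat q.1 q.2| ^ 2 :=
      Finset.sum_nonneg fun q _ => sq_nonneg _
    have h1 : SE ^ 2 ≤ ((k : ℝ) * k) * Dv ^ 2 := by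
      rw [hprod, hDv2]
      calc (∑ q ∈ sE ×ˢ sE, |v q.1 * v q.2 - Mhat q.1 q.2|) ^ 2
          ≤ ((sE ×ˢ sE).card : ℝ) * ∑ q ∈ sE ×ˢ sE, |v q.1 * v q.2 - Mhat q.1 q.2| ^ 2 := hcs
        _ ≤ ((k : ℝ) * k) * ∑ i, ∑ j, (v i * v j - Mhat i j) ^ 2 := by
            apply mul_le_mul hcard hsq hsqnn (by positivity)
    have hkDnn : 0 ≤ (k : ℝ) * Dv := by positivity
    have h1' : SE ^ 2 ≤ ((k : ℝ) * Dv) ^ 2 := h1.trans_eq (by ring)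
    calc SE = Real.sqrt (SE ^ 2) := (Real.sqrt_sq hSEnn).symm
      _ ≤ Real.sqrt (((k : ℝ) * Dv) ^ 2) := Real.sqrt_le_sqrt h1'
      _ = (k : ℝ) * Dv := Real.sqrt_sq hkDnn
  -- master inequality
  have hhalf : theta / 2 * Dv ^ 2 ≤ theta * (1 - ∑ i, v i * Mhat.mulVec v i) := by
    rw [hDv2, e2]
    nlinarith [mul_nonneg htheta.le (sub_nonneg.mpr hfrob)]
  have hmaster : theta / 2 * Dv ^ 2 ≤ 2 * lam * ((k : ℝ) * Dv) + eps := by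
    have m1 := mul_le_mul_of_nonneg_left h7 hlam.le
    have m2 := mul_le_mul_of_nonneg_left hSE (by positivity : (0:ℝ) ≤ 2 * lam)
    ring_nf at m1 m2 hhalf hcurv hT0 hT0T1 hT1 ⊢
    linarith [hhalf, hcurv, hT0, hT0T1, hT1, m1, m2]
  have hquad : Dv ≤ 4 * lam * k / theta + Real.sqrt (2 * eps / theta) := by
    apply stmt11_quad_root hDvnn (by positivity) (Real.sqrt_nonneg _)
    have hb2 : (Real.sqrt (2 * eps / theta)) ^ 2 = 2 * eps / theta :=
      Real.sq_sqrt (by positivity)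
    rw [hb2]
    have hstep : Dv ^ 2 ≤ (4 * lam * (k:ℝ) * Dv + 2 * eps) / theta := by
      rw [le_div_iff₀ htheta]
      ring_nf at hmaster ⊢
      linarith [hmaster]
    calc Dv ^ 2 ≤ (4 * lam * (k:ℝ) * Dv + 2 * eps) / theta := hstep
      _ = 4 * lam * (k:ℝ) / theta * Dv + 2 * eps / theta := by ring
  -- part 2
  have hcross : ∑ i, ∑ j, (vhat i * vhat j - v i * v j) ^ 2
      = 2 - 2 * (∑ i, vhat i * v i) ^ 2 := by
    have hexp := expand vhat hvhat (Matrix.of fun i j => v i * v j)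
    simp only [Matrix.of_apply] at hexp
    have hA : ∑ i, ∑ j, (v i * v j) ^ 2 = 1 := by
      simp_rw [mul_pow, ← Finset.mul_sum, hv, mul_one]
      exact hv
    have hB : ∑ i, vhat i * (Matrix.of fun i j => v i * v j).mulVec vhat i
        = (∑ i, vhat i * v i) ^ 2 := by
      simp only [Matrix.mulVec, dotProduct, Matrix.of_apply, Finset.mul_sum]
      rw [sq, Finset.sum_mul_sum]
      exact Finset.sum_congr rfl fun i _ => Finset.sum_congr rfl fun j _ => by ring
    rw [hexp, hA, hB]
    ring
  have tri := stmt11_l2_triangle (n := Fin p × Fin p)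
    (fun q => vhat q.1 * vhat q.2 - Mhat q.1 q.2) (fun q => Mhat q.1 q.2 - v q.1 * v q.2)
  have t1 : ∑ q : Fin p × Fin p,
      ((vhat q.1 * vhat q.2 - Mhat q.1 q.2) + (Mhat q.1 q.2 - v q.1 * v q.2)) ^ 2
      = ∑ i, ∑ j, (vhat i * vhat j - v i * v j) ^ 2 := by
    rw [Fintype.sum_prod_type]
    exact Finset.sum_congr rfl fun i _ => Finset.sum_congr rfl fun j _ => by ring
  have t2 : ∑ q : Fin p × Fin p, (vhat q.1 * vhat q.2 - Mhat q.1 q.2) ^ 2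
      = ∑ i, ∑ j, (vhat i * vhat j - Mhat i j) ^ 2 := by
    rw [Fintype.sum_prod_type]
  have t3 : ∑ q : Fin p × Fin p, (Mhat q.1 q.2 - v q.1 * v q.2) ^ 2
      = ∑ i, ∑ j, (v i * v j - Mhat i j) ^ 2 := by
    rw [Fintype.sum_prod_type]
    exact Finset.sum_congr rfl fun i _ => Finset.sum_congr rfl fun j _ => by ring
  beta_reduce at tri
  rw [t1, t2, t3, hcross] at tri
  rw [← hDv] at tri
  have h2c : Real.sqrt (2 - 2 * (∑ i, vhat i * v i) ^ 2) ≤ 2 * Dv := by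
    calc Real.sqrt (2 - 2 * (∑ i, vhat i * v i) ^ 2)
        ≤ Real.sqrt (∑ i, ∑ j, (vhat i * vhat j - Mhat i j) ^ 2) + Dv := tri
      _ ≤ Dv + Dv := by linarith [part1]
      _ = 2 * Dv := by ring
  have hsplit2 : Real.sqrt (2 - 2 * (∑ i, vhat i * v i) ^ 2)
      = Real.sqrt 2 * Real.sqrt (1 - (∑ i, vhat i * v i) ^ 2) := by
    rw [show (2:ℝ) - 2 * (∑ i, vhat i * v i) ^ 2
      = 2 * (1 - (∑ i, vhat i * v i) ^ 2) by ring]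
    exact Real.sqrt_mul (by norm_num) _
  have goal2 : Real.sqrt (1 - (∑ i, vhat i * v i) ^ 2) ≤ Real.sqrt 2 * Dv := by
    have hs2 : (0:ℝ) < Real.sqrt 2 := Real.sqrt_pos.mpr (by norm_num)
    have hs2sq : Real.sqrt 2 * Real.sqrt 2 = 2 := Real.mul_self_sqrt (by norm_num)
    have h := h2c
    rw [hsplit2] at h
    have h' : Real.sqrt 2 * Real.sqrt (1 - (∑ i, vhat i * v i) ^ 2)
        ≤ Real.sqrt 2 * (Real.sqrt 2 * Dv) := by
      rw [← mul_assoc, hs2sq]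
      linarith
    exact le_of_mul_le_mul_left h' hs2
  refine ⟨part1, ?_, ?_⟩
  · exact goal2
  · have hss : Real.sqrt 2 * Real.sqrt (2 * eps / theta) = 2 * Real.sqrt (eps / theta) := by
      rw [← Real.sqrt_mul (by norm_num : (0:ℝ) ≤ 2)]
      rw [show (2:ℝ) * (2 * eps / theta) = 2 ^ 2 * (eps / theta) by ring]
      rw [Real.sqrt_mul (by positivity), Real.sqrt_sq (by norm_num)]
    calc Real.sqrt (1 - (∑ i, vhat i * v i) ^ 2) ≤ Real.sqrt 2 * Dv := goal2
      _ ≤ Real.sqrt 2 * (4 * lam * k / theta + Real.sqrt (2 * eps / theta)) :=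
          mul_le_mul_of_nonneg_left hquad (Real.sqrt_nonneg 2)
      _ = 4 * Real.sqrt 2 * lam * k / theta + 2 * Real.sqrt (eps / theta) := by
          rw [mul_add, hss]
          ring
end

section
/- Let v̂ ∈ ℝ^p be a unit vector, let v̂₀ be a unit vector proportional to the vector obtained by setting all but the k largest (in absolute value) coordinates of v̂ to zero, and let v be any unit vector with ‖v‖₀ ≤ k. Then L(v̂₀, v) ≤ 2·L(v̂, v), where L(u,w) := (1 - (uᵀw)²)^{1/2}. -/
open Finset
open scoped Classical

lemma sin_tri (a b c α β : ℝ) (ha : a^2 + α^2 = 1) (hb : b^2 + β^2 = 1)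
    (hα : 0 ≤ α) (hβ : 0 ≤ β) (h : (c - a*b)^2 ≤ (α*β)^2) :
    Real.sqrt (1 - c^2) ≤ α + β := by
  by_cases h1 : 1 ≤ α + β
  · calc Real.sqrt (1 - c^2) ≤ 1 := Real.sqrt_le_one.mpr (by nlinarith [sq_nonneg c])
      _ ≤ α + β := h1
  · push_neg at h1
    have hα1 : α ≤ 1 := by linarith
    have hβ1 : β ≤ 1 := by linarith
    set A := |a| with hA
    set B := |b| with hB
    have hA2 : A^2 = a^2 := sq_abs a
    have hB2 : B^2 = b^2 := sq_abs b
    have hA0 : 0 ≤ A := abs_nonneg a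
    have hB0 : 0 ≤ B := abs_nonneg b
    have hA1 : A ≤ 1 := by nlinarith [sq_nonneg α]
    have hB1 : B ≤ 1 := by nlinarith [sq_nonneg β]
    have hAge : 1 - α ≤ A := by nlinarith
    have hBge : 1 - β ≤ B := by nlinarith
    have hab : α * β ≤ A * B := by nlinarith
    have hcab : |c - a*b| ≤ α * β := by
      rw [abs_le]; constructor <;> nlinarith [mul_nonneg hα hβ, sq_nonneg (c - a*b + α*β), sq_nonneg (c - a*b - α*β)]
    have habs : A*B - α*β ≤ |c| := by
      have := abs_sub_abs_le_abs_sub (a*b) c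
      rw [abs_mul] at this
      rw [abs_sub_comm] at hcab
      linarith
    have hc2 : (A*B - α*β)^2 ≤ c^2 := by
      have h0 : 0 ≤ A*B - α*β := by linarith
      calc (A*B - α*β)^2 ≤ |c|^2 := pow_le_pow_left₀ h0 habs 2
        _ = c^2 := sq_abs c
    have key : (A*β + B*α)^2 + (A*B - α*β)^2 = (A^2+α^2)*(B^2+β^2) := by ring
    rw [hA2, hB2, ha, hb, one_mul] at key
    have h3 : A*β + B*α ≤ α + β := by
      have e1 : A*β ≤ β := mul_le_of_le_one_left hβ hA1
      have e2 : B*α ≤ α := mul_le_of_le_one_left hα hB1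
      linarith
    have h4 : (A*β+B*α)^2 ≤ (α+β)^2 :=
      pow_le_pow_left₀ (by positivity) h3 2
    have : 1 - c^2 ≤ (α + β)^2 := by linarith
    calc Real.sqrt (1 - c^2) ≤ Real.sqrt ((α+β)^2) := Real.sqrt_le_sqrt this
      _ = α + β := by rw [Real.sqrt_sq (by linarith)]

/-- Truncating `v̂` to its `k` largest coordinates and renormalising at most doubles the loss:
`L(v̂₀, v) ≤ 2 L(v̂, v)` for any `k`-sparse unit vector `v`. -/
theorem stmt_13 (p k : ℕ) (vhat : Fin p → ℝ) (hvhat : ∑ i, vhat i ^ 2 = 1)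
    (Shat : Finset (Fin p)) (hcard : Shat.card = k)
    (htop : ∀ i ∈ Shat, ∀ j ∉ Shat, |vhat j| ≤ |vhat i|)
    (w : Fin p → ℝ) (hw : w = fun j => if j ∈ Shat then vhat j else 0)
    (hwne : w ≠ 0)
    (vhat0 : Fin p → ℝ) (hvhat0 : vhat0 = (Real.sqrt (∑ i, w i ^ 2))⁻¹ • w)
    (v : Fin p → ℝ) (hv : ∑ i, v i ^ 2 = 1)
    (hv0 : (Finset.univ.filter (fun j => v j ≠ 0)).card ≤ k) :
    Real.sqrt (1 - (∑ i, vhat0 i * v i) ^ 2)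
      ≤ 2 * Real.sqrt (1 - (∑ i, vhat i * v i) ^ 2) := by
  -- basic quantities
  set T : Finset (Fin p) := Finset.univ.filter (fun j => v j ≠ 0) with hT
  have hw2 : ∀ i, w i ^ 2 = if i ∈ Shat then vhat i ^ 2 else 0 := by
    intro i; rw [hw]; dsimp only; split <;> simp
  have hs2S : ∑ i, w i ^ 2 = ∑ i ∈ Shat, vhat i ^ 2 := by
    simp_rw [hw2]; rw [Finset.sum_ite_mem, Finset.univ_inter]
  set s2 : ℝ := ∑ i ∈ Shat, vhat i ^ 2 with hs2
  have hs2pos : 0 < s2 := by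
    obtain ⟨j, hj⟩ : ∃ j, w j ≠ 0 := by
      by_contra hcon; push_neg at hcon; exact hwne (funext hcon)
    rw [← hs2S]
    exact Finset.sum_pos' (fun i _ => sq_nonneg _)
      ⟨j, Finset.mem_univ j, by positivity⟩
  have hs2le : s2 ≤ 1 := by
    rw [← hvhat, hs2]
    exact Finset.sum_le_sum_of_subset_of_nonneg (Finset.subset_univ _)
      (fun i _ _ => sq_nonneg _)
  set s : ℝ := Real.sqrt (∑ i, w i ^ 2) with hsdef
  have hs_sq : s ^ 2 = s2 := by rw [hsdef, Real.sq_sqrt (by rw [hs2S]; exact hs2pos.le)]; exact hs2S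
  have hspos : 0 < s := Real.sqrt_pos.mpr (hs2pos.trans_eq hs2S.symm)
  -- vhat0 facts
  have hwv : ∀ i, w i * vhat i = w i ^ 2 := by
    intro i; rw [hw]; dsimp only; split <;> ring
  have hA : ∑ i, vhat0 i * vhat i = s := by
    rw [hvhat0]
    simp only [Pi.smul_apply, smul_eq_mul, mul_assoc, ← Finset.mul_sum]
    simp_rw [hwv]
    rw [hs2S, ← hs_sq, sq, inv_mul_cancel_left₀ hspos.ne']
  have hN0 : ∑ i, vhat0 i ^ 2 = 1 := by
    rw [hvhat0]
    simp only [Pi.smul_apply, smul_eq_mul, mul_pow, ← Finset.mul_sum]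
    rw [hs2S, ← hs_sq, ← mul_pow, inv_mul_cancel₀ hspos.ne', one_pow]
  -- b bound:  b² ≤ s2
  set b : ℝ := ∑ i, vhat i * v i with hb
  have hbT : b = ∑ i ∈ T, vhat i * v i := by
    rw [hb, hT]
    exact (Finset.sum_filter_of_ne (fun i _ h => by
      intro hv0'; exact h (by rw [hv0', mul_zero]))).symm
  have hTcard : T.card ≤ Shat.card := by rw [hcard]; exact hv0
  -- exchange argument: ∑_T vhat² ≤ ∑_Shat vhat²
  have hexch : ∑ i ∈ T, vhat i ^ 2 ≤ s2 := by
    have hsplitT : ∑ i ∈ T ∩ Shat, vhat i ^ 2 + ∑ i ∈ T \ Shat, vhat i ^ 2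
        = ∑ i ∈ T, vhat i ^ 2 := Finset.sum_inter_add_sum_sdiff _ _ _
    have hsplitS : ∑ i ∈ Shat ∩ T, vhat i ^ 2 + ∑ i ∈ Shat \ T, vhat i ^ 2
        = s2 := Finset.sum_inter_add_sum_sdiff _ _ _
    have hic : T ∩ Shat = Shat ∩ T := Finset.inter_comm _ _
    have hcle : (T \ Shat).card ≤ (Shat \ T).card := by
      have h1 := Finset.card_inter_add_card_sdiff T Shat
      have h2 := Finset.card_inter_add_card_sdiff Shat T
      rw [hic] at h1
      omega
    have hkey : ∑ i ∈ T \ Shat, vhat i ^ 2 ≤ ∑ i ∈ Shat \ T, vhat i ^ 2 := by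
      rcases Finset.eq_empty_or_nonempty (Shat \ T) with he | hne
      · have : T \ Shat = ∅ := by
          rw [he] at hcle; simpa using Finset.card_eq_zero.mp (Nat.le_zero.mp hcle)
        rw [this, he]
      · set m : ℝ := (Shat \ T).inf' hne (fun i => vhat i ^ 2) with hm
        obtain ⟨i0, hi0mem, hi0⟩ := Finset.exists_mem_eq_inf' hne (fun i => vhat i ^ 2)
        have hi0S : i0 ∈ Shat := (Finset.mem_sdiff.mp hi0mem).1
        have hm0 : 0 ≤ m := by rw [hm, hi0]; exact sq_nonneg _
        have hub : ∀ j ∈ T \ Shat, vhat j ^ 2 ≤ m := by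
          intro j hj
          have hjS : j ∉ Shat := (Finset.mem_sdiff.mp hj).2
          have := htop i0 hi0S j hjS
          rw [hm, hi0]
          calc vhat j ^ 2 = |vhat j| ^ 2 := (sq_abs _).symm
            _ ≤ |vhat i0| ^ 2 := pow_le_pow_left₀ (abs_nonneg _) this 2
            _ = vhat i0 ^ 2 := sq_abs _
        calc ∑ i ∈ T \ Shat, vhat i ^ 2 ≤ (T \ Shat).card • m :=
              Finset.sum_le_card_nsmul _ _ _ hub
          _ = ((T \ Shat).card : ℝ) * m := nsmul_eq_mul _ _
          _ ≤ ((Shat \ T).card : ℝ) * m :=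
              mul_le_mul_of_nonneg_right (Nat.cast_le.mpr hcle) hm0
          _ = (Shat \ T).card • m := (nsmul_eq_mul _ _).symm
          _ ≤ ∑ i ∈ Shat \ T, vhat i ^ 2 :=
              Finset.card_nsmul_le_sum _ _ _ (fun i hi => Finset.inf'_le _ hi)
    calc ∑ i ∈ T, vhat i ^ 2
        = ∑ i ∈ T ∩ Shat, vhat i ^ 2 + ∑ i ∈ T \ Shat, vhat i ^ 2 := hsplitT.symm
      _ ≤ ∑ i ∈ Shat ∩ T, vhat i ^ 2 + ∑ i ∈ Shat \ T, vhat i ^ 2 := by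
          rw [hic]; linarith
      _ = s2 := hsplitS
  have hb2 : b ^ 2 ≤ s2 := by
    have hcs := Finset.sum_mul_sq_le_sq_mul_sq T vhat v
    have hvT : ∑ i ∈ T, v i ^ 2 ≤ 1 := by
      rw [← hv]
      exact Finset.sum_le_sum_of_subset_of_nonneg (Finset.subset_univ _)
        (fun i _ _ => sq_nonneg _)
    have hvhatT : 0 ≤ ∑ i ∈ T, vhat i ^ 2 := Finset.sum_nonneg (fun i _ => sq_nonneg _)
    calc b ^ 2 = (∑ i ∈ T, vhat i * v i) ^ 2 := by rw [hbT]
      _ ≤ (∑ i ∈ T, vhat i ^ 2) * ∑ i ∈ T, v i ^ 2 := hcs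
      _ ≤ (∑ i ∈ T, vhat i ^ 2) * 1 := mul_le_mul_of_nonneg_left hvT hvhatT
      _ ≤ s2 := by rw [mul_one]; exact hexch
  have hb1 : b ^ 2 ≤ 1 := hb2.trans hs2le
  -- Cauchy-Schwarz for the triangle inequality
  set c : ℝ := ∑ i, vhat0 i * v i with hc
  have hcs2 := Finset.sum_mul_sq_le_sq_mul_sq Finset.univ
      (fun i => vhat0 i - s * vhat i) (fun i => v i - b * vhat i)
  have e1 : ∑ i, (vhat0 i - s * vhat i) * (v i - b * vhat i) = c - s * b := by
    have hpt : ∀ i, (vhat0 i - s * vhat i) * (v i - b * vhat i)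
        = vhat0 i * v i - b * (vhat0 i * vhat i) - s * (vhat i * v i)
          + (s * b) * vhat i ^ 2 := fun i => by ring
    simp_rw [hpt]
    rw [Finset.sum_add_distrib, Finset.sum_sub_distrib, Finset.sum_sub_distrib,
      ← Finset.mul_sum, ← Finset.mul_sum, ← Finset.mul_sum, hA, hvhat, ← hc, ← hb]
    ring
  have e2 : ∑ i, (vhat0 i - s * vhat i) ^ 2 = 1 - s ^ 2 := by
    have hpt : ∀ i, (vhat0 i - s * vhat i) ^ 2
        = vhat0 i ^ 2 - (2 * s) * (vhat0 i * vhat i) + s ^ 2 * vhat i ^ 2 :=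
      fun i => by ring
    simp_rw [hpt]
    rw [Finset.sum_add_distrib, Finset.sum_sub_distrib,
      ← Finset.mul_sum, ← Finset.mul_sum, hA, hvhat, hN0]
    ring
  have e3 : ∑ i, (v i - b * vhat i) ^ 2 = 1 - b ^ 2 := by
    have hpt : ∀ i, (v i - b * vhat i) ^ 2
        = v i ^ 2 - (2 * b) * (vhat i * v i) + b ^ 2 * vhat i ^ 2 :=
      fun i => by ring
    simp_rw [hpt]
    rw [Finset.sum_add_distrib, Finset.sum_sub_distrib,
      ← Finset.mul_sum, ← Finset.mul_sum, ← hb, hvhat, hv]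
    ring
  rw [e1, e2, e3] at hcs2
  -- apply the sine triangle inequality
  have hs1 : s ^ 2 ≤ 1 := by rw [hs_sq]; exact hs2le
  set α : ℝ := Real.sqrt (1 - s ^ 2) with hα
  set β : ℝ := Real.sqrt (1 - b ^ 2) with hβ
  have hα2 : α ^ 2 = 1 - s ^ 2 := Real.sq_sqrt (by linarith)
  have hβ2 : β ^ 2 = 1 - b ^ 2 := Real.sq_sqrt (by linarith)
  have htri : Real.sqrt (1 - c ^ 2) ≤ α + β := by
    apply sin_tri s b c α β (by linarith) (by linarith)
      (Real.sqrt_nonneg _) (Real.sqrt_nonneg _)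
    rw [mul_pow, hα2, hβ2]
    exact hcs2
  have hαβ : α ≤ β := by
    apply Real.sqrt_le_sqrt
    have : b ^ 2 ≤ s ^ 2 := by rw [hs_sq]; exact hb2
    linarith
  calc Real.sqrt (1 - c ^ 2) ≤ α + β := htri
    _ ≤ 2 * β := by linarith
end

section
/- Let α, β ∈ (0,1) and k, p ∈ ℕ with k ≤ αβp. Then there exists a family 𝒮₀ of k-element subsets of {1,…,p} (equivalently, binary vectors with exactly k ones) such that any two distinct members of 𝒮₀ have Hamming distance at least 2(1-α)k, and log|𝒮₀| ≥ ρ·k·log(p/k), where ρ := (α/(-log(αβ)))·(-log β + β - 1). -/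
set_option maxHeartbeats 1000000

open Finset
open scoped symmDiff

lemma lemA' {p k j : ℕ} (u : Finset (Fin p)) (hu : u.card = j) (hjk : j ≤ k) :
    ((powersetCard k (univ : Finset (Fin p))).filter (fun t => u ⊆ t)).card
      = (p - j).choose (k - j) := by
  have hcard : (univ \ u).card = p - j := by
    rw [card_sdiff_of_subset (subset_univ u), hu, card_univ, Fintype.card_fin]
  rw [← hcard, ← card_powersetCard]
  apply Finset.card_bij' (fun t _ => t \ u) (fun v _ => v ∪ u)
  · intro t ht
    simp only [mem_filter, mem_powersetCard] at ht
    obtain ⟨⟨-, htk⟩, hut⟩ := ht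
    simp only [mem_powersetCard]
    exact ⟨sdiff_subset_sdiff (subset_univ t) le_rfl,
      by rw [card_sdiff_of_subset hut, htk, hu]⟩
  · intro v hv
    simp only [mem_powersetCard] at hv
    obtain ⟨hvs, hvc⟩ := hv
    have hdisj : Disjoint v u := (disjoint_of_subset_left hvs sdiff_disjoint)
    simp only [mem_filter, mem_powersetCard]
    refine ⟨⟨subset_univ _, ?_⟩, subset_union_right⟩
    rw [card_union_of_disjoint hdisj, hvc, hu]
    omega
  · intro t ht
    simp only [mem_filter] at ht
    exact sdiff_union_of_subset ht.2
  · intro v hv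
    simp only [mem_powersetCard] at hv
    have hdisj : Disjoint v u := (disjoint_of_subset_left hv.1 sdiff_disjoint)
    exact union_sdiff_cancel_right hdisj

lemma lemB' {p k j : ℕ} (s : Finset (Fin p)) (hs : s.card = k) (hjk : j ≤ k) :
    ∑ t ∈ powersetCard k (univ : Finset (Fin p)), ((t ∩ s).card.choose j)
      = k.choose j * (p - j).choose (k - j) := by
  have key : ∀ t : Finset (Fin p), (t ∩ s).card.choose j
      = ((powersetCard j s).filter (fun u => u ⊆ t)).card := by
    intro t
    rw [← card_powersetCard]
    congr 1
    ext u
    simp only [mem_powersetCard, mem_filter, subset_inter_iff]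
    tauto
  calc ∑ t ∈ powersetCard k (univ : Finset (Fin p)), ((t ∩ s).card.choose j)
      = ∑ t ∈ powersetCard k (univ : Finset (Fin p)),
          ∑ u ∈ powersetCard j s, (if u ⊆ t then 1 else 0) := by
        refine Finset.sum_congr rfl fun t _ => ?_
        rw [key t, card_filter]
    _ = ∑ u ∈ powersetCard j s,
          ∑ t ∈ powersetCard k (univ : Finset (Fin p)), (if u ⊆ t then 1 else 0) :=
        Finset.sum_comm
    _ = ∑ u ∈ powersetCard j s, (p - j).choose (k - j) := by
        refine Finset.sum_congr rfl fun u hu => ?_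
        rw [← card_filter, lemA' u ?_ hjk]
        exact (mem_powersetCard.mp hu).2
    _ = k.choose j * (p - j).choose (k - j) := by
        rw [Finset.sum_const, card_powersetCard, hs, smul_eq_mul]

lemma lemC1 (k p : ℕ) (hkp : k ≤ p) : ∀ j : ℕ,
    k.descFactorial j * p ^ j ≤ p.descFactorial j * k ^ j := by
  intro j
  induction j with
  | zero => simp
  | succ j ih =>
    rw [Nat.descFactorial_succ, Nat.descFactorial_succ, pow_succ, pow_succ]
    have h1 : (k - j) * p ≤ (p - j) * k := by
      rw [Nat.sub_mul, Nat.sub_mul]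
      have h2 : j * k ≤ j * p := Nat.mul_le_mul_left j hkp
      have h3 : k * p = p * k := Nat.mul_comm k p
      omega
    calc (k - j) * k.descFactorial j * (p ^ j * p)
        = ((k - j) * p) * (k.descFactorial j * p ^ j) := by ring
      _ ≤ ((p - j) * k) * (p.descFactorial j * k ^ j) := Nat.mul_le_mul h1 ih
      _ = (p - j) * p.descFactorial j * (k ^ j * k) := by ring

lemma lemC2 (k p j : ℕ) (hkp : k ≤ p) : k.choose j * p ^ j ≤ p.choose j * k ^ j := by
  have h := lemC1 k p hkp j
  rw [Nat.descFactorial_eq_factorial_mul_choose, Nat.descFactorial_eq_factorial_mul_choose] at h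
  have hj : 0 < j.factorial := Nat.factorial_pos j
  have h' : j.factorial * (k.choose j * p ^ j) ≤ j.factorial * (p.choose j * k ^ j) := by
    calc j.factorial * (k.choose j * p ^ j) = j.factorial * k.choose j * p ^ j := by ring
      _ ≤ j.factorial * p.choose j * k ^ j := h
      _ = j.factorial * (p.choose j * k ^ j) := by ring
  exact Nat.le_of_mul_le_mul_left h' hj

lemma lemC (k p j : ℕ) (hjk : j ≤ k) (hkp : k ≤ p) (hp : 0 < p) :
    ((k.choose j : ℝ)) * ((p - j).choose (k - j) : ℝ)
      ≤ (p.choose k : ℝ) * (k.choose j : ℝ) * ((k : ℝ) / p) ^ j := by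
  have hid : p.choose k * k.choose j = p.choose j * (p - j).choose (k - j) :=
    Nat.choose_mul hjk
  have hpj : (0:ℝ) < (p.choose j : ℝ) := by
    exact_mod_cast Nat.choose_pos (hjk.trans hkp)
  have hppos : (0:ℝ) < (p:ℝ) := by exact_mod_cast hp
  have hpow : (0:ℝ) < ((p:ℝ)) ^ j := pow_pos hppos j
  have h2 : (k.choose j : ℝ) * (p:ℝ)^j ≤ (p.choose j : ℝ) * (k:ℝ)^j := by
    exact_mod_cast lemC2 k p j hkp
  refine le_of_mul_le_mul_right ?_ hpj
  calc (k.choose j : ℝ) * ((p - j).choose (k - j) : ℝ) * (p.choose j : ℝ)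
      = (k.choose j : ℝ) * ((p.choose j : ℝ) * ((p - j).choose (k - j) : ℝ)) := by ring
    _ = (k.choose j : ℝ) * ((p.choose k : ℝ) * (k.choose j : ℝ)) := by
        norm_cast; rw [← hid]
    _ ≤ (p.choose k : ℝ) * (k.choose j : ℝ) * ((k : ℝ) / p) ^ j * (p.choose j : ℝ) := by
        rw [div_pow]
        rw [show (p.choose k : ℝ) * (k.choose j : ℝ) * ((k:ℝ)^j / (p:ℝ)^j) * (p.choose j : ℝ)
          = (p.choose k : ℝ) * (k.choose j : ℝ) * ((p.choose j : ℝ) * (k:ℝ)^j) / (p:ℝ)^j by ring]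
        rw [le_div_iff₀ hpow]
        calc (k.choose j : ℝ) * ((p.choose k : ℝ) * (k.choose j : ℝ)) * (p:ℝ)^j
            = ((k.choose j : ℝ) * (p:ℝ)^j) * ((p.choose k : ℝ) * (k.choose j : ℝ)) := by ring
          _ ≤ ((p.choose j : ℝ) * (k:ℝ)^j) * ((p.choose k : ℝ) * (k.choose j : ℝ)) := by
              apply mul_le_mul_of_nonneg_right h2
              positivity
          _ = (p.choose k : ℝ) * (k.choose j : ℝ) * ((p.choose j : ℝ) * (k:ℝ)^j) := by ring

lemma lemD' {p k : ℕ} (s : Finset (Fin p)) (hs : s.card = k) (hkp : k ≤ p) (hp : 0 < p)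
    (x : ℝ) (hx : 1 ≤ x) :
    ∑ t ∈ powersetCard k (univ : Finset (Fin p)), x ^ ((t ∩ s).card)
      ≤ (p.choose k : ℝ) * (1 + ((k:ℝ)/p) * (x-1)) ^ k := by
  have hx0 : 0 ≤ x - 1 := by linarith
  have step1 : ∀ c : ℕ, c ≤ k →
      x ^ c = ∑ j ∈ range (k+1), (x-1)^j * ((c.choose j : ℕ) : ℝ) := by
    intro c hc
    have : x ^ c = ((x-1) + 1) ^ c := by ring_nf
    rw [this, add_pow]
    simp only [one_pow, mul_one]
    apply Finset.sum_subset
    · exact Finset.range_subset_range.mpr (by omega)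
    · intro j hj hj2
      simp only [Finset.mem_range, not_lt] at hj2
      rw [Nat.choose_eq_zero_of_lt (by omega : c < j)]
      simp
  calc ∑ t ∈ powersetCard k (univ : Finset (Fin p)), x ^ ((t ∩ s).card)
      = ∑ t ∈ powersetCard k (univ : Finset (Fin p)),
          ∑ j ∈ range (k+1), (x-1)^j * (((t ∩ s).card.choose j : ℕ) : ℝ) := by
        refine Finset.sum_congr rfl fun t ht => ?_
        apply step1
        have := (mem_powersetCard.mp ht).2
        calc (t ∩ s).card ≤ t.card := card_le_card inter_subset_left
          _ = k := this
    _ = ∑ j ∈ range (k+1), (x-1)^j *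
          ((∑ t ∈ powersetCard k (univ : Finset (Fin p)), ((t ∩ s).card.choose j) : ℕ) : ℝ) := by
        rw [Finset.sum_comm]
        refine Finset.sum_congr rfl fun j hj => ?_
        rw [Nat.cast_sum, Finset.mul_sum]
    _ ≤ ∑ j ∈ range (k+1), (x-1)^j * ((p.choose k : ℝ) * (k.choose j : ℝ) * ((k:ℝ)/p)^j) := by
        refine Finset.sum_le_sum fun j hj => ?_
        have hjk : j ≤ k := by simpa [Nat.lt_succ_iff] using Finset.mem_range.mp hj
        apply mul_le_mul_of_nonneg_left _ (pow_nonneg hx0 j)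
        rw [lemB' s hs hjk, Nat.cast_mul]
        exact lemC k p j hjk hkp hp
    _ = (p.choose k : ℝ) * ∑ j ∈ range (k+1), (((k:ℝ)/p)*(x-1))^j * 1^(k-j) * (k.choose j : ℝ) := by
        rw [Finset.mul_sum]
        refine Finset.sum_congr rfl fun j hj => ?_
        rw [mul_pow]
        ring
    _ = (p.choose k : ℝ) * (1 + ((k:ℝ)/p) * (x-1)) ^ k := by
        rw [← add_pow]
        ring_nf

lemma lemE' (p k m : ℕ) (hmk : m ≤ k) :
    ∃ S₀ : Finset (Finset (Fin p)), S₀ ⊆ powersetCard k (univ : Finset (Fin p)) ∧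
      (∀ s ∈ S₀, ∀ t ∈ S₀, s ≠ t → (s ∩ t).card < m) ∧
      (∀ t ∈ powersetCard k (univ : Finset (Fin p)), ∃ s ∈ S₀, m ≤ (s ∩ t).card) := by
  classical
  set F := (powersetCard k (univ : Finset (Fin p))).powerset.filter
      (fun S => ∀ s ∈ S, ∀ t ∈ S, s ≠ t → (s ∩ t).card < m) with hF
  have hne : F.Nonempty := ⟨∅, by simp [hF]⟩
  obtain ⟨S₀, hS₀F, hmax⟩ := F.exists_max_image card hne
  simp only [hF, mem_filter, mem_powerset] at hS₀F
  refine ⟨S₀, hS₀F.1, hS₀F.2, ?_⟩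
  intro t ht
  by_contra hcon
  push_neg at hcon
  have htS₀ : t ∉ S₀ := by
    intro htS
    have := hcon t htS
    have h2 : (t ∩ t).card = k := by
      rw [inter_self]
      exact (mem_powersetCard.mp ht).2
    omega
  have hins : insert t S₀ ∈ F := by
    simp only [hF, mem_filter, mem_powerset]
    constructor
    · exact insert_subset ht hS₀F.1
    · intro s hs u hu hsu
      rcases mem_insert.mp hs with rfl | hs' <;> rcases mem_insert.mp hu with rfl | hu'
      · exact absurd rfl hsu
      · rw [inter_comm]; exact hcon u hu'
      · exact hcon s hs'
      · exact hS₀F.2 s hs' u hu' hsu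
  have := hmax _ hins
  rw [card_insert_of_notMem htS₀] at this
  omega

lemma lemAN' (α β q : ℝ) (hα1 : 0 < α) (hα2 : α < 1) (hβ1 : 0 < β) (hβ2 : β < 1)
    (hq : 0 < q) (hqab : q ≤ α * β) :
    (α / (-Real.log (α*β))) * (-Real.log β + β - 1) * (-Real.log q)
      ≤ α * (Real.log α - Real.log q) + (1-α) * (Real.log (1-α) - Real.log (1-q)) := by
  have hab0 : 0 < α * β := mul_pos hα1 hβ1
  have hab1 : α * β < 1 := by nlinarith
  have hq1 : q < 1 := lt_of_le_of_lt hqab hab1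
  have hLpos : 0 < -Real.log (α*β) := by
    have := Real.log_neg hab0 hab1
    linarith
  set L : ℝ := -Real.log (α*β) with hL
  have hlogmul : Real.log (α*β) = Real.log α + Real.log β :=
    Real.log_mul (ne_of_gt hα1) (ne_of_gt hβ1)
  have hlogα : Real.log α < 0 := Real.log_neg hα1 hα2
  have hlogβ : Real.log β < 0 := Real.log_neg hβ1 hβ2
  set c : ℝ := -Real.log β + β - 1 with hc
  have hc0 : 0 ≤ c := by
    have := Real.log_le_sub_one_of_pos hβ1
    simp only [hc]; linarith
  set ρ : ℝ := α / L * c with hρ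
  have hρ0 : 0 ≤ ρ := by positivity
  -- Step 1 : ρ ≤ α - α*β
  have hinvβ : -Real.log β ≤ 1/β - 1 := by
    have := Real.log_le_sub_one_of_pos (show (0:ℝ) < β⁻¹ by positivity)
    rw [Real.log_inv] at this
    simp only [one_div]; linarith
  have hstep1 : ρ ≤ α - α * β := by
    have hcL : c ≤ (1-β) * L := by
      have h1 : β * (-Real.log β) ≤ 1 - β := by
        have := mul_le_mul_of_nonneg_left hinvβ (le_of_lt hβ1)
        have hβne : β ≠ 0 := ne_of_gt hβ1
        rw [mul_sub, mul_one_div, div_self hβne] at this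
        linarith
      have h2 : 0 ≤ (1-β) * (-Real.log α) := by nlinarith
      have hLe : L = -Real.log α - Real.log β := by rw [hL, hlogmul]; ring
      rw [hLe]
      nlinarith
    rw [hρ, div_mul_eq_mul_div, div_le_iff₀ hLpos]
    calc α * c ≤ α * ((1-β) * L) := by nlinarith
      _ = (α - α*β) * L := by ring
  -- Step 3 : (1-α)(log(1-α) - log(1-q)) ≥ -(α - q)
  have hstep3 : -(α - q) ≤ (1-α) * (Real.log (1-α) - Real.log (1-q)) := by
    have hpos : (0:ℝ) < (1-q)/(1-α) := by
      apply div_pos <;> linarith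
    have h := Real.log_le_sub_one_of_pos hpos
    rw [Real.log_div (by linarith) (by linarith)] at h
    have h1α : (0:ℝ) < 1 - α := by linarith
    have h2 : (1-α) * (Real.log (1-q) - Real.log (1-α)) ≤ (1-α) * ((1-q)/(1-α) - 1) := by
      nlinarith
    have h3 : (1-α) * ((1-q)/(1-α) - 1) = α - q := by
      field_simp
      ring
    nlinarith
  -- Step 2 : α log α - α log q - α + q ≥ ρ * (-log q)
  have hD0 : 0 ≤ Real.log (α*β) - Real.log q := by
    have := Real.log_le_log hq hqab
    linarith
  set D : ℝ := Real.log (α*β) - Real.log q with hDdef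
  have hDlb : (α*β - q)/(α*β) ≤ D := by
    have hpos : (0:ℝ) < q/(α*β) := by positivity
    have h := Real.log_le_sub_one_of_pos hpos
    rw [Real.log_div (ne_of_gt hq) (ne_of_gt hab0)] at h
    have : Real.log q - Real.log (α*β) ≤ q/(α*β) - 1 := h
    have heq : (α*β - q)/(α*β) = 1 - q/(α*β) := by
      field_simp
    rw [heq]
    linarith
  have hstep2 : ρ * (-Real.log q) ≤ α * Real.log α - α * Real.log q - α + q := by
    have hlogq : -Real.log q = L + D := by rw [hL, hDdef]; ring
    have hρL : ρ * L = α * c := by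
      rw [hρ]; field_simp
    have hkey : α*β - q ≤ (α - ρ) * D := by
      have h1 : α*β - q ≤ α*β * D := by
        have := mul_le_mul_of_nonneg_left hDlb (le_of_lt hab0)
        rw [mul_div_cancel₀] at this
        · linarith
        · exact ne_of_gt hab0
      have h2 : α*β * D ≤ (α - ρ) * D := by
        apply mul_le_mul_of_nonneg_right _ hD0
        linarith
      linarith
    have hαlog : α * Real.log α - α * Real.log q = -α * Real.log β + α * D := by
      rw [hDdef, hlogmul]; ring
    rw [hlogq, hαlog]
    have : ρ * (L + D) = α * c + ρ * D := by rw [mul_add, hρL]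
    rw [this]
    rw [hc]
    linarith [hkey]
  calc (α / L) * c * (-Real.log q) = ρ * (-Real.log q) := by rw [hρ]
    _ ≤ α * Real.log α - α * Real.log q - α + q := hstep2
    _ ≤ α * (Real.log α - Real.log q) + (1-α) * (Real.log (1-α) - Real.log (1-q)) := by
        have := hstep3; nlinarith

/-- Gilbert–Varshamov variant: there is a family of `k`-subsets of `{1,…,p}` of log-cardinality
at least `ρ k log(p/k)` with pairwise Hamming distance at least `2(1-α)k`. -/
theorem stmt_17 (α β : ℝ) (hα : α ∈ Set.Ioo (0:ℝ) 1) (hβ : β ∈ Set.Ioo (0:ℝ) 1)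
    (k p : ℕ) (hk : 1 ≤ k) (hkp : (k : ℝ) ≤ α * β * p) :
    ∃ 𝒮₀ : Finset (Finset (Fin p)),
      (∀ s ∈ 𝒮₀, s.card = k) ∧
      (∀ s ∈ 𝒮₀, ∀ t ∈ 𝒮₀, s ≠ t → 2 * (1 - α) * k ≤ ((s ∆ t).card : ℝ)) ∧
      (α / (-Real.log (α * β))) * (-Real.log β + β - 1) * k * Real.log (p / k)
        ≤ Real.log (𝒮₀.card) := by
  obtain ⟨hα1, hα2⟩ := hα
  obtain ⟨hβ1, hβ2⟩ := hβ
  have hab0 : 0 < α * β := mul_pos hα1 hβ1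
  have hab1 : α * β < 1 := by nlinarith
  have hk0 : (0:ℝ) < k := by exact_mod_cast hk
  have hp0R : (0:ℝ) < p := by nlinarith
  have hp0 : 0 < p := by exact_mod_cast hp0R
  have hkpR : (k:ℝ) < p := by nlinarith
  have hkpN : k ≤ p := by exact_mod_cast hkpR.le
  -- set up q, m, x, y
  obtain ⟨q, hqdef⟩ : ∃ q : ℝ, q = (k:ℝ)/p := ⟨_, rfl⟩
  have hq0 : 0 < q := by rw [hqdef]; positivity
  have hqab : q ≤ α * β := by
    rw [hqdef, div_le_iff₀ hp0R]; exact hkp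
  have hq1 : q < 1 := by
    rw [hqdef, div_lt_one hp0R]; exact hkpR
  have hqα : q < α := lt_of_le_of_lt hqab (by nlinarith)
  obtain ⟨m, hmdef⟩ : ∃ m : ℕ, m = Nat.floor (α * k) + 1 := ⟨_, rfl⟩
  have hmk : m ≤ k := by
    have h : Nat.floor (α * k) < k := by
      rw [Nat.floor_lt (by positivity)]
      calc α * k < 1 * k := by nlinarith
        _ = k := by ring
    omega
  have hαkm : α * k ≤ (m:ℝ) := by
    have h := Nat.lt_floor_add_one (α * k)
    rw [hmdef]
    push_cast
    push_cast at h
    linarith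
  obtain ⟨x, hxdef⟩ : ∃ x : ℝ, x = α * (1-q) / (q * (1-α)) := ⟨_, rfl⟩
  have hden : 0 < q * (1-α) := by nlinarith
  have hx1 : 1 ≤ x := by
    rw [hxdef, le_div_iff₀ hden]
    nlinarith
  have hx0 : (0:ℝ) < x := lt_of_lt_of_le one_pos hx1
  obtain ⟨y, hydef⟩ : ∃ y : ℝ, y = 1 + q * (x - 1) := ⟨_, rfl⟩
  have hy : y = (1-q)/(1-α) := by
    have hqne : q ≠ 0 := ne_of_gt hq0
    have hαne : (1:ℝ) - α ≠ 0 := by linarith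
    rw [hydef, hxdef]
    field_simp
    ring
  have hy0 : 0 < y := by
    rw [hy]; apply div_pos <;> linarith
  -- greedy family
  obtain ⟨S₀, hsub, hdist, hcover⟩ := lemE' p k m hmk
  have hcardk : ∀ s ∈ S₀, s.card = k := fun s hs => (mem_powersetCard.mp (hsub hs)).2
  refine ⟨S₀, hcardk, ?_, ?_⟩
  · -- distance property
    intro s hs t ht hst
    have hc := hdist s hs t ht hst
    have hcR : ((s ∩ t).card : ℝ) ≤ α * k := by
      have h1 : (s ∩ t).card ≤ Nat.floor (α * k) := by omega
      calc ((s ∩ t).card : ℝ) ≤ (Nat.floor (α * k) : ℝ) := by exact_mod_cast h1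
        _ ≤ α * k := Nat.floor_le (by positivity)
    have hsd : (s ∆ t).card + (s ∩ t).card + (s ∩ t).card = s.card + t.card := by
      rw [symmDiff_def, sup_eq_union, card_union_of_disjoint disjoint_sdiff_sdiff]
      have h1 : (s \ t).card + (s ∩ t).card = s.card := card_sdiff_add_card_inter s t
      have h2 : (t \ s).card + (t ∩ s).card = t.card := card_sdiff_add_card_inter t s
      rw [inter_comm t s] at h2
      omega
    have hsk := hcardk s hs
    have htk := hcardk t ht
    have heq : ((s ∆ t).card : ℝ) = 2 * k - 2 * ((s ∩ t).card : ℝ) := by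
      rw [hsk, htk] at hsd
      have := congrArg (fun n : ℕ => (n : ℝ)) hsd
      push_cast at this
      linarith
    rw [heq]
    nlinarith
  · -- log cardinality bound
    have hCpk : 0 < p.choose k := Nat.choose_pos hkpN
    have hCpkR : (0:ℝ) < (p.choose k : ℝ) := by exact_mod_cast hCpk
    set A := powersetCard k (univ : Finset (Fin p)) with hAdef
    have hcardA : A.card = p.choose k := by
      rw [hAdef, card_powersetCard, card_univ, Fintype.card_fin]
    -- covering inequality in ℕ
    have hcoverset : A ⊆ S₀.biUnion (fun s => A.filter (fun t => m ≤ (s ∩ t).card)) := by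
      intro t ht
      obtain ⟨s, hsS, hms⟩ := hcover t ht
      exact mem_biUnion.mpr ⟨s, hsS, mem_filter.mpr ⟨ht, hms⟩⟩
    have hnat : p.choose k ≤ ∑ s ∈ S₀, (A.filter (fun t => m ≤ (s ∩ t).card)).card := by
      calc p.choose k = A.card := hcardA.symm
        _ ≤ (S₀.biUnion (fun s => A.filter (fun t => m ≤ (s ∩ t).card))).card :=
            card_le_card hcoverset
        _ ≤ ∑ s ∈ S₀, (A.filter (fun t => m ≤ (s ∩ t).card)).card := card_biUnion_le
    -- per-ball bound in ℝ
    have hball : ∀ s ∈ S₀,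
        ((A.filter (fun t => m ≤ (s ∩ t).card)).card : ℝ) * x ^ m
          ≤ (p.choose k : ℝ) * y ^ k := by
      intro s hs
      have hsk := hcardk s hs
      calc ((A.filter (fun t => m ≤ (s ∩ t).card)).card : ℝ) * x ^ m
          = ∑ t ∈ A.filter (fun t => m ≤ (s ∩ t).card), x ^ m := by
            rw [Finset.sum_const, nsmul_eq_mul]
        _ ≤ ∑ t ∈ A.filter (fun t => m ≤ (s ∩ t).card), x ^ ((t ∩ s).card) := by
            refine Finset.sum_le_sum fun t ht => ?_
            have hmt : m ≤ (s ∩ t).card := (mem_filter.mp ht).2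
            rw [inter_comm s t] at hmt
            exact pow_le_pow_right₀ hx1 hmt
        _ ≤ ∑ t ∈ A, x ^ ((t ∩ s).card) := by
            refine Finset.sum_le_sum_of_subset_of_nonneg (filter_subset _ _) fun t _ _ => ?_
            exact le_of_lt (pow_pos hx0 _)
        _ ≤ (p.choose k : ℝ) * (1 + ((k:ℝ)/p) * (x-1)) ^ k := lemD' s hsk hkpN hp0 x hx1
        _ = (p.choose k : ℝ) * y ^ k := by rw [hydef, hqdef]
    -- combine: x^m ≤ N * y^k
    set N : ℝ := (S₀.card : ℝ) with hNdef
    have hmain : x ^ m ≤ N * y ^ k := by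
      have h1 : (p.choose k : ℝ) * x ^ m ≤ N * ((p.choose k : ℝ) * y ^ k) := by
        calc (p.choose k : ℝ) * x ^ m
            ≤ (∑ s ∈ S₀, ((A.filter (fun t => m ≤ (s ∩ t).card)).card : ℝ)) * x ^ m := by
              apply mul_le_mul_of_nonneg_right _ (le_of_lt (pow_pos hx0 m))
              exact_mod_cast hnat
          _ = ∑ s ∈ S₀, ((A.filter (fun t => m ≤ (s ∩ t).card)).card : ℝ) * x ^ m := by
              rw [Finset.sum_mul]
          _ ≤ ∑ s ∈ S₀, (p.choose k : ℝ) * y ^ k := Finset.sum_le_sum hball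
          _ = N * ((p.choose k : ℝ) * y ^ k) := by
              rw [Finset.sum_const, nsmul_eq_mul, hNdef]
      have h2 : (p.choose k : ℝ) * x ^ m ≤ (p.choose k : ℝ) * (N * y ^ k) := by
        calc (p.choose k : ℝ) * x ^ m ≤ N * ((p.choose k : ℝ) * y ^ k) := h1
          _ = (p.choose k : ℝ) * (N * y ^ k) := by ring
      exact le_of_mul_le_mul_left h2 hCpkR
    -- take logs
    have hxm0 : (0:ℝ) < x ^ m / y ^ k := div_pos (pow_pos hx0 m) (pow_pos hy0 k)
    have hyk : (0:ℝ) < y ^ k := pow_pos hy0 k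
    have hN0 : 0 < N := by
      have hNyk : (0:ℝ) < N * y ^ k := lt_of_lt_of_le (pow_pos hx0 m) hmain
      have h := div_pos hNyk hyk
      rwa [mul_div_assoc, div_self (ne_of_gt hyk), mul_one] at h
    have hlogN : Real.log (x ^ m / y ^ k) ≤ Real.log N := by
      apply Real.log_le_log hxm0
      rw [div_le_iff₀ (pow_pos hy0 k)]
      exact hmain
    have hlogxy : Real.log (x ^ m / y ^ k) = m * Real.log x - k * Real.log y := by
      rw [Real.log_div (ne_of_gt (pow_pos hx0 m)) (ne_of_gt (pow_pos hy0 k)),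
        Real.log_pow, Real.log_pow]
    have hlogx0 : 0 ≤ Real.log x := Real.log_nonneg hx1
    -- KL computation
    have hlogx : Real.log x = Real.log α + Real.log (1-q) - Real.log q - Real.log (1-α) := by
      rw [hxdef, Real.log_div (ne_of_gt (mul_pos hα1 (by linarith : (0:ℝ) < 1-q)))
          (ne_of_gt (mul_pos hq0 (by linarith : (0:ℝ) < 1-α))),
        Real.log_mul (ne_of_gt hα1) (ne_of_gt (show (0:ℝ) < 1-q by linarith)),
        Real.log_mul (ne_of_gt hq0) (ne_of_gt (show (0:ℝ) < 1-α by linarith))]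
      ring
    have hlogy : Real.log y = Real.log (1-q) - Real.log (1-α) := by
      rw [hy, Real.log_div (ne_of_gt (show (0:ℝ) < 1-q by linarith))
        (ne_of_gt (show (0:ℝ) < 1-α by linarith))]
    have hKL : α * Real.log x - Real.log y
        = α * (Real.log α - Real.log q) + (1-α) * (Real.log (1-α) - Real.log (1-q)) := by
      rw [hlogx, hlogy]; ring
    have hAN := lemAN' α β q hα1 hα2 hβ1 hβ2 hq0 hqab
    have hlogpk : Real.log ((p:ℝ) / k) = -Real.log q := by
      rw [hqdef, Real.log_div (by positivity) (by positivity),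
        Real.log_div (by positivity) (by positivity)]
      ring
    calc (α / (-Real.log (α * β))) * (-Real.log β + β - 1) * k * Real.log ((p:ℝ) / k)
        = k * ((α / (-Real.log (α * β))) * (-Real.log β + β - 1) * (-Real.log q)) := by
          rw [hlogpk]; ring
      _ ≤ k * (α * Real.log x - Real.log y) := by
          apply mul_le_mul_of_nonneg_left _ (le_of_lt hk0)
          rw [hKL]; exact hAN
      _ = α * k * Real.log x - k * Real.log y := by ring
      _ ≤ m * Real.log x - k * Real.log y := by
          have := mul_le_mul_of_nonneg_right hαkm hlogx0
          linarith
      _ = Real.log (x ^ m / y ^ k) := hlogxy.symm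
      _ ≤ Real.log N := hlogN
end
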